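/- arXiv:1907.10536 — 10 statements merged into one kernel-verified Lean document; each statement's English description precedes it below -/
import Mathlib

section
/- Let x be a solution trajectory of (DIN-AVD)_{α,β,b} with α ≥ 1. Suppose the growth conditions (G2): b(t) > β'(t) + β(t)/t for all t ≥ t₀, and (G3): t·w'(t) ≤ (α−3)·w(t) for all t ≥ t₀ hold, where w(t) := b(t) − β'(t) − β(t)/t. Then w(t) is positive and there exists a constant C > 0 such that f(x(t)) − min_H f ≤ C/(t² w(t)) for all t ≥ t₀. -/
open Real Set MeasureTheory InnerProductSpace

lemma grad_convex_ineq {H : Type*} [NormedAddCommGroup H] [InnerProductSpace ℝ H] [CompleteSpace H]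
    {f : H → ℝ} (hconv : ConvexOn ℝ Set.univ f) {p g : H} (hg : HasGradientAt f g p) (q : H) :
    ⟪g, q - p⟫_ℝ ≤ f q - f p := by
  set c : ℝ → H := fun s => p + s • (q - p) with hc_def
  have hc : HasDerivAt c (q - p) 0 := by
    rw [hc_def]
    simpa using ((hasDerivAt_id (0:ℝ)).smul_const (q - p)).const_add p
  have hφ : HasDerivAt (f ∘ c) (⟪g, q - p⟫_ℝ) 0 := by
    have hc0 : c 0 = p := by simp [hc_def]
    have hfd : HasFDerivAt f ((toDual ℝ H) g) (c 0) := hc0 ▸ hg.hasFDerivAt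
    have := hfd.comp_hasDerivAt 0 hc
    simpa [InnerProductSpace.toDual_apply_apply] using this
  have hφconv : ConvexOn ℝ Set.univ (f ∘ c) := by
    have := hconv.comp_affineMap (AffineMap.lineMap p q)
    have heq : (f ∘ (AffineMap.lineMap p q)) = f ∘ c := by
      funext s
      simp [hc_def, AffineMap.lineMap_apply, add_comm]
    rw [heq] at this
    simpa using this
  have := hφconv.le_slope_of_hasDerivAt (Set.mem_univ (0:ℝ)) (Set.mem_univ (1:ℝ)) one_pos hφ
  have hs : slope (f ∘ c) 0 1 = f q - f p := by
    simp [slope_def_field, hc_def]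
  rw [hs] at this
  exact this

/-- Theorem 2.1 (i): convergence rate of the values for (DIN-AVD)_{α,β,b}. -/
theorem dinavd_value_convergence_rate
    {H : Type*} [NormedAddCommGroup H] [InnerProductSpace ℝ H] [CompleteSpace H]
    (f : H → ℝ) (hf : ContDiff ℝ 2 f) (hconv : ConvexOn ℝ Set.univ f)
    (xstar : H) (hmin : ∀ y, f xstar ≤ f y)
    (t₀ : ℝ) (ht₀ : 0 < t₀)
    (α : ℝ) (hα : 1 ≤ α)
    (β b β' b' w w' : ℝ → ℝ)
    (hβnn : ∀ t ≥ t₀, 0 ≤ β t) (hbnn : ∀ t ≥ t₀, 0 ≤ b t)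
    (hβ' : ∀ t ≥ t₀, HasDerivAt β (β' t) t)
    (hb' : ∀ t ≥ t₀, HasDerivAt b (b' t) t)
    (hw : ∀ t ≥ t₀, w t = b t - β' t - β t / t)
    (hw' : ∀ t ≥ t₀, HasDerivAt w (w' t) t)
    (x x' x'' : ℝ → H)
    (hx' : ∀ t ≥ t₀, HasDerivAt x (x' t) t)
    (hx'' : ∀ t ≥ t₀, HasDerivAt x' (x'' t) t)
    (hx''cont : ContinuousOn x'' (Set.Ici t₀))
    (hode : ∀ t ≥ t₀,
      x'' t + (α / t) • x' t + β t • (fderiv ℝ (gradient f) (x t)) (x' t)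
        + b t • gradient f (x t) = 0)
    (hG2 : ∀ t ≥ t₀, β' t + β t / t < b t)
    (hG3 : ∀ t ≥ t₀, t * w' t ≤ (α - 3) * w t) :
    (∀ t ≥ t₀, 0 < w t) ∧
      ∃ C > 0, ∀ t ≥ t₀, f (x t) - f xstar ≤ C / (t ^ 2 * w t) := by
  -- positivity of w
  have hwpos : ∀ t ≥ t₀, 0 < w t := by
    intro t ht
    rw [hw t ht]
    linarith [hG2 t ht]
  refine ⟨hwpos, ?_⟩
  have hfd : Differentiable ℝ f := hf.differentiable (by norm_num)
  have hgradC1 : ContDiff ℝ 1 (gradient f) := by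
    have h2 : ContDiff ℝ (1+1) f := by exact_mod_cast hf
    have h1 : ContDiff ℝ 1 (fderiv ℝ f) := (contDiff_succ_iff_fderiv.mp h2).2.2
    have heq : gradient f = fun y => (toDual ℝ H).symm (fderiv ℝ f y) := rfl
    rw [heq]
    exact (toDual ℝ H).symm.contDiff.comp h1
  have hgradDiff : Differentiable ℝ (gradient f) := hgradC1.differentiable (by norm_num)
  set g : ℝ → H := fun t => gradient f (x t) with hg_def
  set A : ℝ → H := fun t => (fderiv ℝ (gradient f) (x t)) (x' t) with hA_def
  -- derivative of g
  have hgAt : ∀ t ≥ t₀, HasDerivAt g (A t) t := fun t ht =>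
    (hgradDiff (x t)).hasFDerivAt.comp_hasDerivAt t (hx' t ht)
  -- derivative of f ∘ x
  have hφAt : ∀ t ≥ t₀, HasDerivAt (fun s => f (x s)) (⟪g t, x' t⟫_ℝ) t := by
    intro t ht
    have := ((hfd (x t)).hasGradientAt.hasFDerivAt).comp_hasDerivAt t (hx' t ht)
    rw [InnerProductSpace.toDual_apply_apply] at this
    exact this
  set v : ℝ → H := fun t => (α - 1) • (x t - xstar) + t • x' t + (t * β t) • g t with hv_def
  have hvAt : ∀ t ≥ t₀, HasDerivAt v (-(t * w t) • g t) t := by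
    intro t ht
    have htpos : 0 < t := lt_of_lt_of_le ht₀ ht
    have h1 : HasDerivAt (fun s => (α - 1) • (x s - xstar)) ((α - 1) • x' t) t :=
      ((hx' t ht).sub_const xstar).const_smul (α - 1)
    have h2 : HasDerivAt (fun s : ℝ => s • x' s) (t • x'' t + (1:ℝ) • x' t) t := by
      exact (hasDerivAt_id' t).smul (hx'' t ht)
    have h3 : HasDerivAt (fun s => (s * β s) • g s)
        ((t * β t) • A t + (1 * β t + t * β' t) • g t) t := by
      exact ((hasDerivAt_id' t).mul (hβ' t ht)).smul (hgAt t ht)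
    have := (h1.add h2).add h3
    refine this.congr_deriv ?_
    have hxx : x'' t = -((α / t) • x' t) - β t • A t - b t • g t := by
      have h0 := hode t ht
      rw [hA_def, hg_def]
      linear_combination (norm := module) h0
    rw [hxx, hw t ht]
    match_scalars <;> field_simp <;> ring
  set E : ℝ → ℝ := fun t => t ^ 2 * w t * (f (x t) - f xstar) + (1/2) * ‖v t‖^2 with hE_def
  set E' : ℝ → ℝ := fun t => (2 * t * w t + t ^ 2 * w' t) * (f (x t) - f xstar)
      + t ^ 2 * w t * ⟪g t, x' t⟫_ℝ + ⟪-(t * w t) • g t, v t⟫_ℝ with hE'_def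
  have hEAt : ∀ t ≥ t₀, HasDerivAt E (E' t) t := by
    intro t ht
    have h1 : HasDerivAt (fun s => s ^ 2 * w s * (f (x s) - f xstar))
        ((2 * t * w t + t ^ 2 * w' t) * (f (x t) - f xstar)
          + t ^ 2 * w t * ⟪g t, x' t⟫_ℝ) t := by
      have ha : HasDerivAt (fun s : ℝ => s ^ 2 * w s) (2 * t * w t + t ^ 2 * w' t) t := by
        have h := ((hasDerivAt_pow 2 t).mul (hw' t ht))
        refine h.congr_deriv ?_
        ring
      have hb : HasDerivAt (fun s => f (x s) - f xstar) (⟪g t, x' t⟫_ℝ) t :=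
        (hφAt t ht).sub_const _
      exact ha.mul hb
    have h2 : HasDerivAt (fun s => (1/2 : ℝ) * ‖v s‖^2) (⟪-(t * w t) • g t, v t⟫_ℝ) t := by
      have hinner : HasDerivAt (fun s => ⟪v s, v s⟫_ℝ)
          (⟪v t, -(t * w t) • g t⟫_ℝ + ⟪-(t * w t) • g t, v t⟫_ℝ) t :=
        (hvAt t ht).inner ℝ (hvAt t ht)
      have heq : (fun s => (1/2 : ℝ) * ‖v s‖^2) = fun s => (1/2 : ℝ) * ⟪v s, v s⟫_ℝ := by
        funext s; rw [real_inner_self_eq_norm_sq]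
      rw [heq]
      have hh := hinner.const_mul (1/2 : ℝ)
      refine hh.congr_deriv ?_
      rw [real_inner_comm (v t)]
      ring
    exact h1.add h2
  -- E' ≤ 0
  have hE'le : ∀ t ≥ t₀, E' t ≤ 0 := by
    intro t ht
    have htpos : 0 < t := lt_of_lt_of_le ht₀ ht
    have hinner_expand : ⟪-(t * w t) • g t, v t⟫_ℝ
        = -(t * w t) * ((α - 1) * ⟪g t, x t - xstar⟫_ℝ + t * ⟪g t, x' t⟫_ℝ
            + (t * β t) * ⟪g t, g t⟫_ℝ) := by
      rw [hv_def]
      simp only [inner_add_right, inner_smul_right, real_inner_smul_left]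
      ring
    have hkey : f (x t) - f xstar ≤ ⟪g t, x t - xstar⟫_ℝ := by
      have := grad_convex_ineq hconv (hfd (x t)).hasGradientAt xstar
      have h2 : ⟪g t, xstar - x t⟫_ℝ ≤ f xstar - f (x t) := this
      have h3 : ⟪g t, x t - xstar⟫_ℝ = -⟪g t, xstar - x t⟫_ℝ := by
        rw [← inner_neg_right]; congr 1; abel
      linarith [h3 ▸ neg_le_neg h2]
    have hfnn : 0 ≤ f (x t) - f xstar := sub_nonneg.mpr (hmin (x t))
    have hggnn : 0 ≤ ⟪g t, g t⟫_ℝ := real_inner_self_nonneg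
    have hG3t := hG3 t ht
    have hwt := hwpos t ht
    have hβt := hβnn t ht
    rw [hE'_def]
    simp only [hinner_expand]
    have hαm1 : 0 ≤ α - 1 := by linarith
    have ha : (t * w t * (α - 1)) * (f (x t) - f xstar)
        ≤ (t * w t * (α - 1)) * ⟪g t, x t - xstar⟫_ℝ :=
      mul_le_mul_of_nonneg_left hkey
        (mul_nonneg (mul_nonneg htpos.le hwt.le) hαm1)
    have hb2 : 0 ≤ t ^ 2 * w t * β t * ⟪g t, g t⟫_ℝ :=
      mul_nonneg (mul_nonneg (mul_nonneg (sq_nonneg t) hwt.le) hβt) hggnn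
    have hc2 : (t * (t * w' t)) * (f (x t) - f xstar)
        ≤ (t * ((α - 3) * w t)) * (f (x t) - f xstar) :=
      mul_le_mul_of_nonneg_right (mul_le_mul_of_nonneg_left hG3t htpos.le) hfnn
    nlinarith [ha, hb2, hc2]
  -- E antitone
  have hEanti : ∀ t ≥ t₀, E t ≤ E t₀ := by
    intro t ht
    have : AntitoneOn E (Set.Ici t₀) := by
      apply antitoneOn_of_deriv_nonpos (convex_Ici t₀)
      · exact fun s hs => (hEAt s hs).continuousAt.continuousWithinAt
      · intro s hs
        rw [interior_Ici] at hs
        exact (hEAt s hs.le).differentiableAt.differentiableWithinAt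
      · intro s hs
        rw [interior_Ici] at hs
        rw [(hEAt s hs.le).deriv]
        exact hE'le s hs.le
    exact this (Set.self_mem_Ici) ht ht
  -- conclusion
  refine ⟨E t₀ + 1, ?_, ?_⟩
  · have : 0 ≤ E t₀ := by
      rw [hE_def]
      have := hwpos t₀ le_rfl
      have := sub_nonneg.mpr (hmin (x t₀))
      positivity
    linarith
  · intro t ht
    have htpos : 0 < t := lt_of_lt_of_le ht₀ ht
    have hwt := hwpos t ht
    have hEt : t ^ 2 * w t * (f (x t) - f xstar) ≤ E t₀ := by
      have hnn : 0 ≤ (1/2 : ℝ) * ‖v t‖^2 := by positivity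
      have h := hEanti t ht
      have hEteq : E t = t ^ 2 * w t * (f (x t) - f xstar) + (1/2 : ℝ) * ‖v t‖^2 := rfl
      have h' : t ^ 2 * w t * (f (x t) - f xstar) + (1/2 : ℝ) * ‖v t‖^2 ≤ E t₀ :=
        hEteq ▸ h
      clear_value E E'
      linarith [h', hnn]
    rw [le_div_iff₀ (by positivity)]
    nlinarith
end

section
/- Let x be a solution trajectory of (DIN-AVD)_{α,β,b} with α ≥ 1. Suppose the growth conditions (G2): b(t) > β'(t) + β(t)/t for all t ≥ t₀, and (G3): t·w'(t) ≤ (α−3)·w(t) for all t ≥ t₀ hold, where w(t) := b(t) − β'(t) − β(t)/t. Then ∫_{t₀}^{∞} t² β(t) w(t) ‖∇f(x(t))‖² dt < +∞. -/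
open Real Set MeasureTheory InnerProductSpace

local notation "⟪" x ", " y "⟫" => @inner ℝ _ _ x y

private lemma dinavd_gradient_contDiff {H : Type*} [NormedAddCommGroup H]
    [InnerProductSpace ℝ H] [CompleteSpace H]
    (f : H → ℝ) (hf : ContDiff ℝ 2 f) : ContDiff ℝ 1 (gradient f) := by
  have h1 : ContDiff ℝ 1 (fderiv ℝ f) := hf.fderiv_right (by norm_num)
  have h2 : gradient f = fun y => (toDual ℝ H).symm (fderiv ℝ f y) := rfl
  rw [h2]
  exact (toDual ℝ H).symm.contDiff.comp h1

private lemma dinavd_grad_ineq {H : Type*} [NormedAddCommGroup H]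
    [InnerProductSpace ℝ H] [CompleteSpace H]
    (f : H → ℝ) (hf : ContDiff ℝ 2 f) (hconv : ConvexOn ℝ Set.univ f) (p q : H) :
    ⟪gradient f p, q - p⟫ ≤ f q - f p := by
  set φ : ℝ → ℝ := fun s => f (p + s • (q - p)) with hφ
  have hφc : ConvexOn ℝ Set.univ φ := by
    have := hconv.comp_affineMap (AffineMap.lineMap p q)
    have heq : (fun s : ℝ => f (p + s • (q - p))) = f ∘ (AffineMap.lineMap p q) := by
      funext s
      simp only [Function.comp_apply, AffineMap.lineMap_apply, vsub_eq_sub, vadd_eq_add, add_comm]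
    rw [hφ, heq]
    simpa using this
  have hline : HasDerivAt (fun s : ℝ => p + s • (q - p)) (q - p) 0 := by
    simpa using ((hasDerivAt_id (0:ℝ)).smul_const (q - p)).const_add p
  have hφ' : HasDerivAt φ ⟪gradient f p, q - p⟫ 0 := by
    have hfd : HasFDerivAt f (toDual ℝ H (gradient f p)) p :=
      ((hf.differentiable (by norm_num)) p).hasGradientAt.hasFDerivAt
    have hfd' : HasFDerivAt f (toDual ℝ H (gradient f p)) (p + (0:ℝ) • (q - p)) := by
      simpa using hfd
    have := hfd'.comp_hasDerivAt 0 hline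
    simpa [toDual_apply_apply, φ, Function.comp_def] using this
  have := hφc.le_slope_of_hasDerivAt (mem_univ 0) (mem_univ 1) zero_lt_one hφ'
  simpa [slope_def_field, φ] using this

/-- Theorem 2.1 (ii): integrability of the gradients for (DIN-AVD)_{α,β,b}. -/
theorem dinavd_gradient_integrability
    {H : Type*} [NormedAddCommGroup H] [InnerProductSpace ℝ H] [CompleteSpace H]
    (f : H → ℝ) (hf : ContDiff ℝ 2 f) (hconv : ConvexOn ℝ Set.univ f)
    (xstar : H) (hmin : ∀ y, f xstar ≤ f y)
    (t₀ : ℝ) (ht₀ : 0 < t₀)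
    (α : ℝ) (hα : 1 ≤ α)
    (β b β' b' w w' : ℝ → ℝ)
    (hβnn : ∀ t ≥ t₀, 0 ≤ β t) (hbnn : ∀ t ≥ t₀, 0 ≤ b t)
    (hβ' : ∀ t ≥ t₀, HasDerivAt β (β' t) t)
    (hb' : ∀ t ≥ t₀, HasDerivAt b (b' t) t)
    (hw : ∀ t ≥ t₀, w t = b t - β' t - β t / t)
    (hw' : ∀ t ≥ t₀, HasDerivAt w (w' t) t)
    (x x' x'' : ℝ → H)
    (hx' : ∀ t ≥ t₀, HasDerivAt x (x' t) t)
    (hx'' : ∀ t ≥ t₀, HasDerivAt x' (x'' t) t)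
    (hx''cont : ContinuousOn x'' (Set.Ici t₀))
    (hode : ∀ t ≥ t₀,
      x'' t + (α / t) • x' t + β t • (fderiv ℝ (gradient f) (x t)) (x' t)
        + b t • gradient f (x t) = 0)
    (hG2 : ∀ t ≥ t₀, β' t + β t / t < b t)
    (hG3 : ∀ t ≥ t₀, t * w' t ≤ (α - 3) * w t) :
    IntegrableOn (fun t => t ^ 2 * β t * w t * ‖gradient f (x t)‖ ^ 2)
      (Set.Ici t₀) := by
  have hfd : Differentiable ℝ f := hf.differentiable (by norm_num)
  have hgrad : ContDiff ℝ 1 (gradient f) := dinavd_gradient_contDiff f hf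
  set G : ℝ → H := fun t => gradient f (x t) with hGdef
  set D : ℝ → H := fun t => (fderiv ℝ (gradient f) (x t)) (x' t) with hDdef
  set g : ℝ → ℝ := fun t => t ^ 2 * β t * w t * ‖gradient f (x t)‖ ^ 2 with hgdef
  have htpos : ∀ t ≥ t₀, 0 < t := fun t ht => lt_of_lt_of_le ht₀ ht
  have hwpos : ∀ t ≥ t₀, 0 < w t := by
    intro t ht
    have h2 := hG2 t ht
    rw [hw t ht]; linarith
  have hG' : ∀ t ≥ t₀, HasDerivAt G (D t) t := fun t ht =>
    ((hgrad.differentiable one_ne_zero (x t)).hasFDerivAt).comp_hasDerivAt t (hx' t ht)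
  set F : ℝ → ℝ := fun t => f (x t) - f xstar with hFdef
  have hFnn : ∀ t, 0 ≤ F t := fun t => sub_nonneg.2 (hmin (x t))
  have hF' : ∀ t ≥ t₀, HasDerivAt F (⟪G t, x' t⟫) t := by
    intro t ht
    have hfda : HasFDerivAt f (toDual ℝ H (G t)) (x t) :=
      (hfd (x t)).hasGradientAt.hasFDerivAt
    have := (hfda.comp_hasDerivAt t (hx' t ht)).sub_const (f xstar)
    simpa [toDual_apply_apply, F] using this
  set v : ℝ → H := fun t => (α - 1) • (x t - xstar) + t • (x' t + β t • G t) with hvdef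
  have hv' : ∀ t ≥ t₀, HasDerivAt v ((-(t * w t)) • G t) t := by
    intro t ht
    have h1 : HasDerivAt (fun s => (α - 1) • (x s - xstar)) ((α - 1) • x' t) t :=
      ((hx' t ht).sub_const xstar).const_smul (α - 1)
    have h2 : HasDerivAt (fun s => β s • G s) (β t • D t + β' t • G t) t :=
      (hβ' t ht).smul (hG' t ht)
    have h3 : HasDerivAt (fun s => x' s + β s • G s)
        (x'' t + (β t • D t + β' t • G t)) t := (hx'' t ht).add h2
    have h4 := (hasDerivAt_id t).smul h3
    have h5 := h1.add h4
    convert h5 using 1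
    · rfl
    have hne : t ≠ 0 := (htpos t ht).ne'
    have hode' : x'' t = -((α / t) • x' t) - β t • D t - b t • G t := by
      have hh : x'' t + (α / t) • x' t + β t • D t + b t • G t = 0 := hode t ht
      linear_combination (norm := module) hh
    rw [hode', hw t ht]
    simp only [id_eq, one_smul]
    match_scalars <;> field_simp <;> ring
  set E : ℝ → ℝ := fun t => t ^ 2 * w t * F t + (1/2) * ⟪v t, v t⟫ with hEdef
  set Ed : ℝ → ℝ := fun t => (2 * t * w t + t ^ 2 * w' t) * F t
      + (t ^ 2 * w t) * ⟪G t, x' t⟫ + ⟪v t, (-(t * w t)) • G t⟫ with hEddef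
  have hE' : ∀ t ≥ t₀, HasDerivAt E (Ed t) t := by
    intro t ht
    have h1 : HasDerivAt (fun s : ℝ => s ^ 2 * w s) (2 * t * w t + t ^ 2 * w' t) t := by
      have := (hasDerivAt_pow 2 t).mul (hw' t ht)
      refine this.congr_deriv ?_
      rw [show (2:ℕ) - 1 = 1 from rfl]
      push_cast
      ring
    have h2 : HasDerivAt (fun s : ℝ => s ^ 2 * w s * F s)
        ((2 * t * w t + t ^ 2 * w' t) * F t + (t ^ 2 * w t) * ⟪G t, x' t⟫) t :=
      h1.mul (hF' t ht)
    have h3 : HasDerivAt (fun s => ⟪v s, v s⟫)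
        (⟪v t, (-(t * w t)) • G t⟫ + ⟪(-(t * w t)) • G t, v t⟫) t :=
      (hv' t ht).inner ℝ (hv' t ht)
    have h4 := h3.const_mul (1/2 : ℝ)
    have h5 := h2.add h4
    refine h5.congr_deriv ?_
    simp only [hEddef]
    rw [real_inner_comm (v t)]
    ring
  have hkey : ∀ t ≥ t₀, Ed t + g t ≤ 0 := by
    intro t ht
    have e1 : ⟪v t, (-(t * w t)) • G t⟫ = -(t * w t) *
        ((α - 1) * ⟪x t - xstar, G t⟫ + t * ⟪x' t, G t⟫ + t * β t * ‖G t‖ ^ 2) := by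
      simp only [hvdef, real_inner_smul_right, inner_add_left, real_inner_smul_left,
        real_inner_self_eq_norm_sq]
      ring
    have e2 : ⟪G t, x' t⟫ = ⟪x' t, G t⟫ := real_inner_comm _ _
    have hconvF : F t ≤ ⟪x t - xstar, G t⟫ := by
      have h2 : ⟪G t, xstar - x t⟫ = -⟪x t - xstar, G t⟫ := by
        rw [← neg_sub (x t) xstar, inner_neg_right (𝕜 := ℝ), real_inner_comm]
      have h : ⟪G t, xstar - x t⟫ ≤ f xstar - f (x t) :=
        dinavd_grad_ineq f hf hconv (x t) xstar
      rw [h2] at h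
      show f (x t) - f xstar ≤ ⟪x t - xstar, G t⟫
      linarith
    have hT := htpos t ht
    have hW := hwpos t ht
    have hB := hβnn t ht
    have hFt := hFnn t
    have hN : (0:ℝ) ≤ ‖G t‖ ^ 2 := sq_nonneg _
    have h5 : (t * w' t) * (t * F t) ≤ ((α - 3) * w t) * (t * F t) :=
      mul_le_mul_of_nonneg_right (hG3 t ht) (mul_nonneg hT.le hFt)
    have h6 : (α - 1) * (t * w t) * F t ≤ (α - 1) * (t * w t) * ⟪x t - xstar, G t⟫ :=
      mul_le_mul_of_nonneg_left hconvF
        (mul_nonneg (sub_nonneg.2 hα) (mul_nonneg hT.le hW.le))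
    have e0 : g t = t ^ 2 * β t * w t * ‖G t‖ ^ 2 := rfl
    have e3 : Ed t = (2 * t * w t + t ^ 2 * w' t) * F t
        + (t ^ 2 * w t) * ⟪G t, x' t⟫ + ⟪v t, (-(t * w t)) • G t⟫ := rfl
    rw [e0, e3, e1, e2]
    nlinarith [h5, h6]
  have hEnn : ∀ t ≥ t₀, 0 ≤ E t := by
    intro t ht
    have h1 : (0:ℝ) ≤ ⟪v t, v t⟫ := real_inner_self_nonneg
    have h2 : 0 ≤ t ^ 2 * w t * F t :=
      mul_nonneg (mul_nonneg (sq_nonneg t) (hwpos t ht).le) (hFnn t)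
    show 0 ≤ t ^ 2 * w t * F t + 1/2 * ⟪v t, v t⟫
    have h3 : (0:ℝ) ≤ 1/2 * ⟪v t, v t⟫ := by positivity
    exact add_nonneg h2 h3
  have hgca : ∀ t ≥ t₀, ContinuousAt g t := by
    intro t ht
    have hxc : ContinuousAt x t := (hx' t ht).continuousAt
    have hn : ContinuousAt (fun s => ‖gradient f (x s)‖ ^ 2) t :=
      ((hgrad.continuous.continuousAt.comp hxc).norm).pow 2
    exact (((continuousAt_id.pow 2).mul (hβ' t ht).continuousAt).mul
      (hw' t ht).continuousAt).mul hn
  have hgnn : ∀ u ≥ t₀, 0 ≤ g u := by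
    intro u hu
    exact mul_nonneg (mul_nonneg (mul_nonneg (sq_nonneg u) (hβnn u hu)) (hwpos u hu).le)
      (sq_nonneg _)
  set t₁ : ℝ := t₀ + 1 with ht₁def
  have ht₁ : t₀ < t₁ := by simp [ht₁def]
  have ht₁' : t₀ ≤ t₁ := ht₁.le
  set Φ : ℝ → ℝ := fun s => E s + ∫ u in t₁..s, g u with hΦdef
  have hgcontOn : ContinuousOn g (Ici t₀) := fun u hu => (hgca u hu).continuousWithinAt
  have hprim : ∀ s ≥ t₁, HasDerivAt (fun r => ∫ u in t₁..r, g u) (g s) s := by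
    intro s hs
    have hs₀ : t₀ ≤ s := le_trans ht₁' hs
    apply intervalIntegral.integral_hasDerivAt_right
    · apply ContinuousOn.intervalIntegrable
      intro u hu
      have : u ∈ Icc t₁ s := by rwa [uIcc_of_le hs] at hu
      exact (hgca u (le_trans ht₁' this.1)).continuousWithinAt
    · exact ⟨Ioi t₀, Ioi_mem_nhds (lt_of_lt_of_le ht₁ hs),
        (hgcontOn.mono Ioi_subset_Ici_self).aestronglyMeasurable measurableSet_Ioi⟩
    · exact hgca s hs₀
  have hΦ' : ∀ s ≥ t₁, HasDerivAt Φ (Ed s + g s) s := fun s hs =>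
    (hE' s (le_trans ht₁' hs)).add (hprim s hs)
  have hΦanti : AntitoneOn Φ (Ici t₁) := by
    apply antitoneOn_of_deriv_nonpos (convex_Ici t₁)
    · exact fun s hs => ((hΦ' s hs).continuousAt).continuousWithinAt
    · intro s hs
      rw [interior_Ici] at hs
      exact ((hΦ' s hs.le).differentiableAt).differentiableWithinAt
    · intro s hs
      rw [interior_Ici] at hs
      rw [(hΦ' s hs.le).deriv]
      exact hkey s (le_trans ht₁' hs.le)
  have hbound : ∀ s ≥ t₁, (∫ u in t₁..s, g u) ≤ E t₁ := by
    intro s hs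
    have h1 := hΦanti self_mem_Ici hs hs
    have h0 : (∫ u in t₁..t₁, g u) = 0 := intervalIntegral.integral_same
    have h2 := hEnn s (le_trans ht₁' hs)
    simp only [hΦdef, h0, add_zero] at h1
    linarith
  have hIoi : IntegrableOn g (Ioi t₁) := by
    apply integrableOn_Ioi_of_intervalIntegral_norm_bounded (E t₁) t₁
      (b := fun i : ℝ => max i t₁) (l := Filter.atTop)
    · intro i
      have hint : IntegrableOn g (Icc t₁ (max i t₁)) := by
        apply ContinuousOn.integrableOn_Icc
        intro u hu
        exact (hgca u (le_trans ht₁' hu.1)).continuousWithinAt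
      exact hint.mono_set Ioc_subset_Icc_self
    · exact Filter.tendsto_atTop_mono (fun i => le_max_left i t₁) Filter.tendsto_id
    · filter_upwards with i
      have hmax : t₁ ≤ max i t₁ := le_max_right i t₁
      have heq : (∫ u in t₁..max i t₁, ‖g u‖) = ∫ u in t₁..max i t₁, g u := by
        apply intervalIntegral.integral_congr
        intro u hu
        rw [uIcc_of_le hmax] at hu
        exact Real.norm_of_nonneg (hgnn u (le_trans ht₁' hu.1))
      rw [heq]
      exact hbound (max i t₁) hmax
  have hIcc : IntegrableOn g (Icc t₀ t₁) := by
    apply ContinuousOn.integrableOn_Icc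
    exact hgcontOn.mono (fun u hu => hu.1)
  have : IntegrableOn g (Icc t₀ t₁ ∪ Ioi t₁) := hIcc.union hIoi
  rwa [Icc_union_Ioi_eq_Ici ht₁'] at this
end

section
/- Let x be a solution trajectory of (DIN-AVD)_{α,β,b} with α ≥ 1, and suppose the growth condition (G2): b(t) > β'(t) + β(t)/t holds for all t ≥ t₀, where w(t) := b(t) − β'(t) − β(t)/t. Fix x* ∈ argmin f and define the energy E(t) := t²w(t)·(f(x(t)) − f(x*)) + (1/2)‖v(t)‖², where v(t) := (α−1)(x(t) − x*) + t·(ẋ(t) + β(t)∇f(x(t))). Then for every t ≥ t₀, E'(t) + β(t)·t²w(t)·‖∇f(x(t))‖² + t·((α−3)w(t) − t·w'(t))·(f(x(t)) − f(x*)) ≤ 0. -/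
open Real Set MeasureTheory

private lemma convex_grad_ineq {H : Type*} [NormedAddCommGroup H] [InnerProductSpace ℝ H]
    [CompleteSpace H] (f : H → ℝ) (hfd : Differentiable ℝ f)
    (hconv : ConvexOn ℝ Set.univ f) (p q : H) :
    f p - f q ≤ inner ℝ (gradient f p) (p - q) := by
  set u := q - p with hu
  have hc : HasDerivAt (fun lam : ℝ => lam • u + p) u 0 := by
    simpa using ((hasDerivAt_id (0:ℝ)).smul_const u).add_const p
  have hφ : HasDerivAt (fun lam : ℝ => f (lam • u + p)) (inner ℝ (gradient f p) u : ℝ) 0 := by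
    have h0 : HasFDerivAt f (InnerProductSpace.toDual ℝ H (gradient f p)) ((0:ℝ) • u + p) := by
      simpa using ((hfd p).hasGradientAt).hasFDerivAt
    exact h0.comp_hasDerivAt 0 hc
  have hφconv : ConvexOn ℝ Set.univ (fun lam : ℝ => f (lam • u + p)) := by
    have := hconv.comp_affineMap (AffineMap.lineMap p q)
    simpa [Function.comp_def, AffineMap.lineMap_apply, hu] using this
  have hs := hφconv.le_slope_of_hasDerivAt (mem_univ (0:ℝ)) (mem_univ (1:ℝ)) one_pos hφ
  have h1 : (inner ℝ (gradient f p) u : ℝ) ≤ f q - f p := by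
    simpa [slope, hu] using hs
  have h2 : (inner ℝ (gradient f p) (p - q) : ℝ) = - inner ℝ (gradient f p) u := by
    rw [hu, ← inner_neg_right, neg_sub]
  linarith [h1, h2]

/-- Lyapunov energy decay inequality for (DIN-AVD)_{α,β,b}. -/
theorem dinavd_energy_decay
    {H : Type*} [NormedAddCommGroup H] [InnerProductSpace ℝ H] [CompleteSpace H]
    (f : H → ℝ) (hf : ContDiff ℝ 2 f) (hconv : ConvexOn ℝ Set.univ f)
    (xstar : H) (hmin : ∀ y, f xstar ≤ f y)
    (t₀ : ℝ) (ht₀ : 0 < t₀)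
    (α : ℝ) (hα : 1 ≤ α)
    (β b β' b' w w' : ℝ → ℝ)
    (hβnn : ∀ t ≥ t₀, 0 ≤ β t) (hbnn : ∀ t ≥ t₀, 0 ≤ b t)
    (hβ' : ∀ t ≥ t₀, HasDerivAt β (β' t) t)
    (hb' : ∀ t ≥ t₀, HasDerivAt b (b' t) t)
    (hw : ∀ t ≥ t₀, w t = b t - β' t - β t / t)
    (hw' : ∀ t ≥ t₀, HasDerivAt w (w' t) t)
    (x x' x'' : ℝ → H)
    (hx' : ∀ t ≥ t₀, HasDerivAt x (x' t) t)
    (hx'' : ∀ t ≥ t₀, HasDerivAt x' (x'' t) t)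
    (hx''cont : ContinuousOn x'' (Set.Ici t₀))
    (hode : ∀ t ≥ t₀,
      x'' t + (α / t) • x' t + β t • (fderiv ℝ (gradient f) (x t)) (x' t)
        + b t • gradient f (x t) = 0)
    (hG2 : ∀ t ≥ t₀, β' t + β t / t < b t) :
    ∀ t ≥ t₀, ∀ d : ℝ,
      HasDerivAt
        (fun s => s ^ 2 * w s * (f (x s) - f xstar) +
          (1 / 2) * ‖(α - 1) • (x s - xstar) +
            s • (x' s + β s • gradient f (x s))‖ ^ 2) d t →
      d + β t * (t ^ 2 * w t) * ‖gradient f (x t)‖ ^ 2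
        + t * ((α - 3) * w t - t * w' t) * (f (x t) - f xstar) ≤ 0 := by
  intro t ht d hd
  have htpos : 0 < t := lt_of_lt_of_le ht₀ ht
  have htne : t ≠ 0 := ne_of_gt htpos
  have hfd : Differentiable ℝ f := hf.differentiable two_ne_zero
  have hGc : ContDiff ℝ 1 (gradient f) :=
    (InnerProductSpace.toDual ℝ H).symm.contDiff.comp (hf.fderiv_right (by norm_num))
  have hGdiff : Differentiable ℝ (gradient f) := hGc.differentiable one_ne_zero
  set g : H := gradient f (x t) with hg
  set A : H := (fderiv ℝ (gradient f) (x t)) (x' t) with hA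
  -- derivative of gradient along trajectory
  have hGx : HasDerivAt (fun s => gradient f (x s)) A t :=
    (hGdiff (x t)).hasFDerivAt.comp_hasDerivAt t (hx' t ht)
  -- derivative of f along trajectory
  have hfx : HasDerivAt (fun s => f (x s)) (inner ℝ g (x' t) : ℝ) t := by
    exact ((hfd (x t)).hasGradientAt).hasFDerivAt.comp_hasDerivAt t (hx' t ht)
  -- first energy term
  have h1 : HasDerivAt (fun s => s ^ 2 * w s * (f (x s) - f xstar))
      ((2 * t * w t + t ^ 2 * w' t) * (f (x t) - f xstar)
        + t ^ 2 * w t * inner ℝ g (x' t)) t := by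
    have hsq : HasDerivAt (fun s : ℝ => s ^ 2) (2 * t) t := by
      simpa using hasDerivAt_pow 2 t
    have := (hsq.mul (hw' t ht)).mul (hfx.sub_const (f xstar))
    exact this
  -- the auxiliary vector v and its derivative
  have hp : HasDerivAt (fun s => x' s + β s • gradient f (x s))
      (x'' t + (β t • A + β' t • g)) t :=
    (hx'' t ht).add ((hβ' t ht).smul hGx)
  have hv : HasDerivAt
      (fun s => (α - 1) • (x s - xstar) + s • (x' s + β s • gradient f (x s)))
      ((α - 1) • x' t +
        (t • (x'' t + (β t • A + β' t • g)) + (1 : ℝ) • (x' t + β t • g))) t :=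
    (((hx' t ht).sub_const xstar).const_smul (α - 1)).add ((hasDerivAt_id t).smul hp)
  -- simplify v'
  have hx2 : x'' t = (-(α / t)) • x' t - β t • A - b t • g := by
    have h0 := hode t ht
    rw [← hg, ← hA] at h0
    have h0' : x'' t + ((α / t) • x' t + β t • A + b t • g) = 0 := by
      rw [← h0]; abel
    have h2 := eq_neg_of_add_eq_zero_left h0'
    rw [h2]; module
  have hveq : (α - 1) • x' t +
      (t • (x'' t + (β t • A + β' t • g)) + (1 : ℝ) • (x' t + β t • g))
      = (-(t * w t)) • g := by
    rw [hx2, hw t ht]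
    match_scalars
    all_goals (try field_simp) <;> ring
  have hv' : HasDerivAt
      (fun s => (α - 1) • (x s - xstar) + s • (x' s + β s • gradient f (x s)))
      ((-(t * w t)) • g) t := hveq ▸ hv
  -- derivative of the squared norm
  have hnorm : HasDerivAt
      (fun s => ‖(α - 1) • (x s - xstar) + s • (x' s + β s • gradient f (x s))‖ ^ 2)
      ((inner ℝ ((α - 1) • (x t - xstar) + t • (x' t + β t • g)) ((-(t * w t)) • g) : ℝ)
        + inner ℝ ((-(t * w t)) • g)
            ((α - 1) • (x t - xstar) + t • (x' t + β t • g))) t := by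
    have := HasDerivAt.inner ℝ hv' hv'
    simpa only [real_inner_self_eq_norm_sq] using this
  have hE : HasDerivAt
      (fun s => s ^ 2 * w s * (f (x s) - f xstar) +
        (1 / 2) * ‖(α - 1) • (x s - xstar) +
          s • (x' s + β s • gradient f (x s))‖ ^ 2)
      ((2 * t * w t + t ^ 2 * w' t) * (f (x t) - f xstar)
        + t ^ 2 * w t * inner ℝ g (x' t)
        + (1 / 2) * ((inner ℝ ((α - 1) • (x t - xstar) + t • (x' t + β t • g))
            ((-(t * w t)) • g) : ℝ)
          + inner ℝ ((-(t * w t)) • g)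
            ((α - 1) • (x t - xstar) + t • (x' t + β t • g)))) t :=
    h1.add (hnorm.const_mul (1 / 2))
  have hdval := hd.unique hE
  -- expand the inner products
  have hip : (inner ℝ ((α - 1) • (x t - xstar) + t • (x' t + β t • g))
      ((-(t * w t)) • g) : ℝ)
      = -(t * w t) * ((α - 1) * inner ℝ g (x t - xstar)
          + t * inner ℝ g (x' t) + t * β t * ‖g‖ ^ 2) := by
    simp only [real_inner_smul_right, inner_add_left, real_inner_smul_left,
      inner_add_right, real_inner_self_eq_norm_sq]
    rw [real_inner_comm (x t - xstar) g, real_inner_comm (x' t) g]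
    ring
  have hip2 : (inner ℝ ((-(t * w t)) • g) ((α - 1) • (x t - xstar)
        + t • (x' t + β t • g)) : ℝ)
      = -(t * w t) * ((α - 1) * inner ℝ g (x t - xstar)
          + t * inner ℝ g (x' t) + t * β t * ‖g‖ ^ 2) := by
    rw [real_inner_comm]; exact hip
  rw [hip, hip2] at hdval
  -- positivity of w at t
  have hwpos : 0 < w t := by
    have := hG2 t ht
    rw [hw t ht]; linarith
  -- convexity inequality
  have hcvx : f (x t) - f xstar ≤ inner ℝ g (x t - xstar) := by
    have := convex_grad_ineq f hfd hconv (x t) xstar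
    simpa [← hg] using this
  calc d + β t * (t ^ 2 * w t) * ‖g‖ ^ 2
        + t * ((α - 3) * w t - t * w' t) * (f (x t) - f xstar)
      = (α - 1) * (t * w t) * ((f (x t) - f xstar) - inner ℝ g (x t - xstar)) := by
        rw [hdval]; ring
    _ ≤ 0 :=
        mul_nonpos_of_nonneg_of_nonpos
          (mul_nonneg (by linarith) (le_of_lt (mul_pos htpos hwpos)))
          (by linarith)
end

section
/- Let α ≥ 1, let b : [t₀,∞) → (0,∞) be of class C¹ with t·b'(t) ≤ (α−3)·b(t) for all t ≥ t₀, and let x : [t₀,∞) → H be a twice continuously differentiable solution of ẍ(t) + (α/t)ẋ(t) + b(t)·∇f(x(t)) = 0. Then there exists a constant C > 0 such that f(x(t)) − min_H f ≤ C/(t² b(t)) for all t ≥ t₀. -/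
open Real Set MeasureTheory

lemma convex_grad_ineq_aux {H : Type*} [NormedAddCommGroup H] [InnerProductSpace ℝ H] [CompleteSpace H]
    {f : H → ℝ} (hconv : ConvexOn ℝ Set.univ f) {y z G : H}
    (hg : HasGradientAt f G y) :
    f y + (inner ℝ G (z - y) : ℝ) ≤ f z := by
  have hpath : HasDerivAt (fun s : ℝ => y + s • (z - y)) (z - y) 0 := by
    simpa using ((hasDerivAt_id (0:ℝ)).smul_const (z - y)).const_add y
  have h2 : HasFDerivAt f (InnerProductSpace.toDual ℝ H G) (y + (0:ℝ) • (z - y)) := by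
    simpa using hg.hasFDerivAt
  have hder : HasDerivAt (fun s : ℝ => f (y + s • (z - y))) (inner ℝ G (z - y) : ℝ) 0 := by
    simpa [InnerProductSpace.toDual_apply_apply, Function.comp_def] using h2.comp_hasDerivAt 0 hpath
  have hφconv : ConvexOn ℝ Set.univ (fun s : ℝ => f (y + s • (z - y))) := by
    have h := hconv.comp_affineMap (AffineMap.lineMap y z)
    have : (f ∘ (AffineMap.lineMap y z)) = fun s : ℝ => f (y + s • (z - y)) := by
      funext s
      simp [AffineMap.lineMap_apply, vsub_eq_sub, vadd_eq_add, add_comm]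
    rw [this] at h
    simpa using h
  have hs := hφconv.le_slope_of_hasDerivAt (Set.mem_univ (0:ℝ)) (Set.mem_univ (1:ℝ))
    one_pos hder
  have hslope : slope (fun s : ℝ => f (y + s • (z - y))) 0 1
      = f (y + (1:ℝ) • (z - y)) - f (y + (0:ℝ) • (z - y)) := by
    simp [slope_def_field]
  rw [hslope] at hs
  simp only [one_smul, zero_smul, add_zero] at hs
  have : y + (z - y) = z := by abel
  rw [this] at hs
  linarith

/-- Case 3: time-rescaled (AVD)_{α} dynamic, convergence rate O(1/(t²b(t))). -/
theorem avd_rescaled_value_convergence_rate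
    {H : Type*} [NormedAddCommGroup H] [InnerProductSpace ℝ H] [CompleteSpace H]
    (f : H → ℝ) (hf : ContDiff ℝ 2 f) (hconv : ConvexOn ℝ Set.univ f)
    (xstar : H) (hmin : ∀ y, f xstar ≤ f y)
    (t₀ : ℝ) (ht₀ : 0 < t₀)
    (α : ℝ) (hα : 1 ≤ α)
    (b b' : ℝ → ℝ)
    (hbpos : ∀ t ≥ t₀, 0 < b t)
    (hb' : ∀ t ≥ t₀, HasDerivAt b (b' t) t)
    (hG3 : ∀ t ≥ t₀, t * b' t ≤ (α - 3) * b t)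
    (x x' x'' : ℝ → H)
    (hx' : ∀ t ≥ t₀, HasDerivAt x (x' t) t)
    (hx'' : ∀ t ≥ t₀, HasDerivAt x' (x'' t) t)
    (hx''cont : ContinuousOn x'' (Set.Ici t₀))
    (hode : ∀ t ≥ t₀,
      x'' t + (α / t) • x' t + b t • gradient f (x t) = 0) :
    ∃ C > 0, ∀ t ≥ t₀, f (x t) - f xstar ≤ C / (t ^ 2 * b t) := by
  classical
  set g : ℝ → H := fun t => gradient f (x t) with hgdef
  have hfd : ∀ y : H, DifferentiableAt ℝ f y := fun y =>
    (hf.differentiable (by norm_num)).differentiableAt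
  have hgrad : ∀ y : H, HasGradientAt f (gradient f y) y := fun y => (hfd y).hasGradientAt
  set v : ℝ → H := fun t => (α - 1) • (x t - xstar) + t • x' t with hvdef
  set E : ℝ → ℝ := fun t =>
    t ^ 2 * b t * (f (x t) - f xstar) + (1/2) * (inner ℝ (v t) (v t) : ℝ) with hEdef
  -- derivative of E
  have hE : ∀ t ≥ t₀, HasDerivAt E
      ((2 * t * b t + t ^ 2 * b' t) * (f (x t) - f xstar)
        - (α - 1) * (t * b t) * (inner ℝ (x t - xstar) (g t) : ℝ)) t := by
    intro t ht
    have htpos : 0 < t := lt_of_lt_of_le ht₀ ht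
    have hb2 : HasDerivAt (fun s => s ^ 2 * b s) (2 * t * b t + t ^ 2 * b' t) t := by
      have : HasDerivAt (fun s => s ^ 2 * b s) _ t := (hasDerivAt_pow 2 t).mul (hb' t ht)
      convert this using 1; push_cast; ring
    have hfx : HasDerivAt (fun s => f (x s) - f xstar) (inner ℝ (g t) (x' t) : ℝ) t := by
      have h1 : HasFDerivAt f (InnerProductSpace.toDual ℝ H (g t)) (x t) :=
        (hgrad (x t)).hasFDerivAt
      have h2 := (h1.comp_hasDerivAt t (hx' t ht)).sub_const (f xstar)
      simpa [InnerProductSpace.toDual_apply_apply] using h2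
    have hA := hb2.mul hfx
    -- derivative of v
    have hv : HasDerivAt v ((α - 1) • x' t + (t • x'' t + (1:ℝ) • x' t)) t := by
      have := (((hx' t ht).sub_const xstar).const_smul (α - 1)).add
        ((hasDerivAt_id t).smul (hx'' t ht))
      exact this
    have hvODE : (α - 1) • x' t + (t • x'' t + (1:ℝ) • x' t) = -((t * b t) • g t) := by
      have h0 := hode t ht
      have h1 : t • (x'' t + (α / t) • x' t + b t • g t) = t • (0 : H) := by rw [h0]
      rw [smul_zero, smul_add, smul_add, smul_smul, smul_smul] at h1
      have ht' : t * (α / t) = α := by field_simp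
      rw [ht'] at h1
      have h2 : t • x'' t + α • x' t = -((t * b t) • g t) := by
        linear_combination (norm := module) h1
      rw [one_smul]
      have hαsplit : (α - 1) • x' t + (t • x'' t + x' t) = t • x'' t + α • x' t := by
        module
      rw [hαsplit, h2]
    have hv' : HasDerivAt v (-((t * b t) • g t)) t := hvODE ▸ hv
    have hB := ((hv'.inner ℝ hv').const_mul (1/2 : ℝ))
    have hEder : HasDerivAt (fun s => (s ^ 2 * b s) * (f (x s) - f xstar) + (1/2 : ℝ) * inner ℝ (v s) (v s)) _ t := hA.add hB
    convert hEder using 1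
    simp only [inner_neg_left, inner_neg_right, real_inner_smul_left, real_inner_smul_right,
      hvdef, inner_add_left, inner_add_right]
    rw [real_inner_comm (g t) (x' t)]
    rw [real_inner_comm (g t) (x t - xstar)]
    ring
  -- E is antitone on Ici t₀
  have hEcont : ContinuousOn E (Set.Ici t₀) := fun t ht =>
    (hE t ht).continuousAt.continuousWithinAt
  have hint : interior (Set.Ici t₀) = Set.Ioi t₀ := interior_Ici
  have hD : ∀ t ≥ t₀, (2 * t * b t + t ^ 2 * b' t) * (f (x t) - f xstar)
        - (α - 1) * (t * b t) * (inner ℝ (x t - xstar) (g t) : ℝ) ≤ 0 := by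
    intro t ht
    have htpos : 0 < t := lt_of_lt_of_le ht₀ ht
    have hbp := hbpos t ht
    have hp : 0 ≤ f (x t) - f xstar := sub_nonneg.2 (hmin (x t))
    have hpq : f (x t) - f xstar ≤ (inner ℝ (x t - xstar) (g t) : ℝ) := by
      have := convex_grad_ineq_aux hconv (z := xstar) (hgrad (x t))
      have h2 : (inner ℝ (g t) (xstar - x t) : ℝ) = -(inner ℝ (x t - xstar) (g t) : ℝ) := by
        rw [real_inner_comm, ← inner_neg_left, neg_sub]
      rw [h2] at this
      linarith
    have h1 : 2 * t * b t + t ^ 2 * b' t ≤ (α - 1) * (t * b t) := by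
      have := mul_le_mul_of_nonneg_left (hG3 t ht) (le_of_lt htpos)
      nlinarith
    have h2 : (2 * t * b t + t ^ 2 * b' t) * (f (x t) - f xstar)
        ≤ (α - 1) * (t * b t) * (f (x t) - f xstar) :=
      mul_le_mul_of_nonneg_right h1 hp
    have h3 : (α - 1) * (t * b t) * (f (x t) - f xstar)
        ≤ (α - 1) * (t * b t) * (inner ℝ (x t - xstar) (g t) : ℝ) := by
      apply mul_le_mul_of_nonneg_left hpq
      have : 0 ≤ α - 1 := by linarith
      positivity
    linarith
  have hanti : AntitoneOn E (Set.Ici t₀) := by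
    apply antitoneOn_of_deriv_nonpos (convex_Ici t₀) hEcont
    · intro t ht
      rw [hint] at ht
      exact (hE t (le_of_lt ht)).differentiableAt.differentiableWithinAt
    · intro t ht
      rw [hint] at ht
      rw [(hE t (le_of_lt ht)).deriv]
      exact hD t (le_of_lt ht)
  refine ⟨E t₀ + 1, ?_, ?_⟩
  · have h1 : 0 ≤ E t₀ := by
      have hp : 0 ≤ f (x t₀) - f xstar := sub_nonneg.2 (hmin (x t₀))
      have := real_inner_self_nonneg (x := v t₀)
      have hbp := hbpos t₀ le_rfl
      simp only [hEdef]
      positivity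
    linarith
  · intro t ht
    have htpos : 0 < t := lt_of_lt_of_le ht₀ ht
    have hbp := hbpos t ht
    have hEt : t ^ 2 * b t * (f (x t) - f xstar) ≤ E t₀ := by
      have h1 : E t ≤ E t₀ := hanti (Set.self_mem_Ici) ht ht
      have h2 : t ^ 2 * b t * (f (x t) - f xstar) ≤ E t := by
        have := real_inner_self_nonneg (x := v t)
        simp only [hEdef]
        linarith
      linarith
    rw [le_div_iff₀ (by positivity)]
    nlinarith [hEt]
end

section
/- Let α ≥ 1 and h > 0, and let (x_k)_{k≥0} be a sequence in H satisfying, for every k ≥ 1, the implicit recursion k(x_{k+1} − 2x_k + x_{k−1}) + α(x_{k+1} − x_k) + β_k·h·k·(∇f(x_{k+1}) − ∇f(x_k)) + b_k·h²·k·∇f(x_{k+1}) = 0 (the (IPAHD) algorithm). Set δ_k := h·(b_k·h·k − β_{k+1} − k(β_{k+1} − β_k))·(k+1), and suppose the growth conditions (G2dis): b_k·h·k − β_{k+1} − k(β_{k+1} − β_k) > 0 for all k, and (G3dis): δ_{k+1} − δ_k ≤ (α−1)·δ_k/(k+1) for all k. Then Σ_k δ_k·β_{k+1}·‖∇f(x_{k+1})‖²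 < +∞. -/
open Real Set

section AuxIPAHD

lemma aux_convex_grad {H : Type*} [NormedAddCommGroup H] [InnerProductSpace ℝ H]
    [CompleteSpace H]
    (f : H → ℝ) (hconv : ConvexOn ℝ Set.univ f) (hdiff : Differentiable ℝ f)
    (u w : H) : f u + (inner ℝ (gradient f u) (w - u) : ℝ) ≤ f w := by
  set φ : ℝ → ℝ := fun t => f (u + t • (w - u)) with hφdef
  have hF : HasFDerivAt f (InnerProductSpace.toDual ℝ H (gradient f u)) u :=
    hasGradientAt_iff_hasFDerivAt.mp (hdiff u).hasGradientAt
  have hF' : HasFDerivAt f (InnerProductSpace.toDual ℝ H (gradient f u))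
      (u + (0:ℝ) • (w - u)) := by simpa using hF
  have hline : HasDerivAt (fun s : ℝ => u + s • (w - u)) (w - u) 0 := by
    simpa using ((hasDerivAt_id (0:ℝ)).smul_const (w - u)).const_add u
  have hφ : HasDerivAt φ ((inner ℝ (gradient f u) (w - u) : ℝ)) 0 := by
    have h3 := by simpa [-toDual_gradient, -inner_gradient_left] using hF'.comp_hasDerivAt 0 hline
    exact h3
  have hφc : ConvexOn ℝ Set.univ φ := by
    have h2 := hconv.comp_affineMap (AffineMap.lineMap u w : ℝ →ᵃ[ℝ] H)
    have heq : φ = f ∘ (AffineMap.lineMap u w : ℝ →ᵃ[ℝ] H) := by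
      funext t
      simp [hφdef, AffineMap.lineMap_apply, add_comm]
    rw [heq]
    simpa using h2
  have hs := hφc.le_slope_of_hasDerivAt (Set.mem_univ (0:ℝ)) (Set.mem_univ (1:ℝ))
    one_pos hφ
  have h1 : φ 1 = f w := by simp [hφdef]
  have h0 : φ 0 = f u := by simp [hφdef]
  rw [slope_def_field] at hs
  rw [h1, h0] at hs
  norm_num [-inner_gradient_left] at hs
  linarith

end AuxIPAHD

set_option maxHeartbeats 1000000 in
/-- Theorem 3.1 (ii): summability of the gradients for (IPAHD). -/
theorem ipahd_gradient_summability
    {H : Type*} [NormedAddCommGroup H] [InnerProductSpace ℝ H] [CompleteSpace H]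
    (f : H → ℝ) (hconv : ConvexOn ℝ Set.univ f) (hdiff : Differentiable ℝ f)
    (xstar : H) (hmin : ∀ y, f xstar ≤ f y)
    (α h : ℝ) (hα : 1 ≤ α) (hh : 0 < h)
    (β b : ℕ → ℝ) (hβnn : ∀ k, 0 ≤ β k) (hbnn : ∀ k, 0 ≤ b k)
    (x : ℕ → H)
    (hrec : ∀ k : ℕ, 1 ≤ k →
      (k : ℝ) • (x (k + 1) - (2 : ℝ) • x k + x (k - 1)) + α • (x (k + 1) - x k)
        + (β k * h * k) • (gradient f (x (k + 1)) - gradient f (x k))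
        + (b k * h ^ 2 * k) • gradient f (x (k + 1)) = 0)
    (δ : ℕ → ℝ)
    (hδ : ∀ k : ℕ, δ k = h * (b k * h * k - β (k + 1) - k * (β (k + 1) - β k)) * (k + 1))
    (hG2 : ∀ k : ℕ, 1 ≤ k → 0 < b k * h * k - β (k + 1) - (k : ℝ) * (β (k + 1) - β k))
    (hG3 : ∀ k ≥ 1, δ (k + 1) - δ k ≤ (α - 1) * δ k / (k + 1)) :
    Summable (fun k => δ k * β (k + 1) * ‖gradient f (x (k + 1))‖ ^ 2) := by
  set g : ℕ → H := fun k => gradient f (x k) with hg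
  set F : ℕ → ℝ := fun k => f (x k) - f xstar with hFdef
  set z : ℕ → H := fun k =>
    (α - 1) • (x k - xstar) + (k : ℝ) • (x k - x (k - 1)) + (β k * h * k) • g k with hz
  clear_value g F z
  -- positivity of δ
  have hδpos : ∀ k : ℕ, 1 ≤ k → 0 < δ k := by
    intro k hk
    rw [hδ]
    have h1 := hG2 k hk
    have h2 : (0:ℝ) < (k:ℝ) + 1 := by positivity
    positivity
  -- nonnegativity of F
  have hF0 : ∀ k, 0 ≤ F k := fun k => by
    simp only [hFdef]; linarith [hmin (x k)]
  -- convexity inequalities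
  have hc1 : ∀ k : ℕ, F (k+1) ≤ (inner ℝ (x (k+1) - xstar) (g (k+1)) : ℝ) := by
    intro k
    have h1 := aux_convex_grad f hconv hdiff (x (k+1)) xstar
    have h2 : (inner ℝ (x (k+1) - xstar) (g (k+1)) : ℝ)
        + (inner ℝ (gradient f (x (k+1))) (xstar - x (k+1)) : ℝ) = 0 := by
      rw [hg, real_inner_comm, ← inner_add_right]
      simp
    simp only [hFdef]
    linarith
  have hc2 : ∀ k : ℕ, F (k+1) - F k ≤ (inner ℝ (x (k+1) - x k) (g (k+1)) : ℝ) := by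
    intro k
    have h1 := aux_convex_grad f hconv hdiff (x (k+1)) (x k)
    have h2 : (inner ℝ (x (k+1) - x k) (g (k+1)) : ℝ)
        + (inner ℝ (gradient f (x (k+1))) (x k - x (k+1)) : ℝ) = 0 := by
      rw [hg, real_inner_comm, ← inner_add_right]
      simp
    simp only [hFdef]
    linarith
  -- key vector identity
  have hkey : ∀ k : ℕ, 1 ≤ k →
      z (k + 1) - z k = (-(δ k) / ((k:ℝ) + 1)) • g (k + 1) := by
    intro k hk
    obtain ⟨m, rfl⟩ : ∃ m, k = m + 1 := ⟨k - 1, by omega⟩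
    have hr := hrec (m + 1) (by omega)
    have hne : ((m+1:ℕ):ℝ) + 1 ≠ 0 := by positivity
    have hcoef : (-(δ (m+1)) / (((m+1:ℕ):ℝ) + 1)) =
        -(h * (b (m+1) * h * ((m+1:ℕ):ℝ) - β (m+1+1) - ((m+1:ℕ):ℝ) * (β (m+1+1) - β (m+1)))) := by
      rw [hδ (m+1)]
      field_simp
    rw [hcoef]
    have hsub1 : (m + 1 + 1 : ℕ) - 1 = m + 1 := by omega
    have hsub2 : (m + 1 : ℕ) - 1 = m := by omega
    simp only [hz, hsub1, hsub2, hg]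
    push_cast at hr ⊢
    linear_combination (norm := module) hr
  -- energy function
  set E : ℕ → ℝ := fun k => δ k * F k + ‖z k‖^2 / 2 with hE
  clear_value E
  have hstep : ∀ k : ℕ, 1 ≤ k →
      E (k+1) + h * (δ k * β (k+1) * ‖g (k+1)‖^2) ≤ E k := by
    intro k hk
    have hk1 : (0:ℝ) < (k:ℝ) + 1 := by positivity
    set q : ℝ := δ k / ((k:ℝ)+1) with hqdef
    have hq0 : 0 ≤ q := le_of_lt (div_pos (hδpos k hk) hk1)
    have hq : q * ((k:ℝ)+1) = δ k := div_mul_cancel₀ _ (ne_of_gt hk1)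
    have hzz : z k = z (k+1) - (z (k+1) - z k) := by abel
    have hznorm : ‖z k‖^2 = ‖z (k+1) - (z (k+1) - z k)‖^2 := by rw [← hzz]
    have hexp : ‖z (k+1) - (z (k+1) - z k)‖^2
        = ‖z (k+1)‖^2 - 2 * (inner ℝ (z (k+1)) (z (k+1) - z k) : ℝ) + ‖z (k+1) - z k‖^2 :=
      norm_sub_sq_real _ _
    have hnorm : ‖z (k+1)‖^2/2 - ‖z k‖^2/2 ≤ (inner ℝ (z (k+1)) (z (k+1) - z k) : ℝ) := by
      nlinarith [sq_nonneg ‖z (k+1) - z k‖]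
    have hkk := hkey k hk
    have hin : (inner ℝ (z (k+1)) (z (k+1) - z k) : ℝ)
        = -q * (inner ℝ (z (k+1)) (g (k+1)) : ℝ) := by
      rw [hkk, real_inner_smul_right, hqdef]; ring
    have hsub1 : (k + 1 : ℕ) - 1 = k := by omega
    have hzexp : (inner ℝ (z (k+1)) (g (k+1)) : ℝ)
        = (α - 1) * (inner ℝ (x (k+1) - xstar) (g (k+1)) : ℝ)
          + ((k:ℝ)+1) * (inner ℝ (x (k+1) - x k) (g (k+1)) : ℝ)
          + (β (k+1) * h * ((k:ℝ)+1)) * ‖g (k+1)‖^2 := by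
      simp only [hz, hsub1]
      push_cast
      rw [inner_add_left, inner_add_left, real_inner_smul_left, real_inner_smul_left,
        real_inner_smul_left, real_inner_self_eq_norm_sq]
    have hB : (α - 1) * F (k+1) + ((k:ℝ)+1) * (F (k+1) - F k)
          + (β (k+1) * h * ((k:ℝ)+1)) * ‖g (k+1)‖^2
        ≤ (inner ℝ (z (k+1)) (g (k+1)) : ℝ) := by
      rw [hzexp]
      have a1 : (0:ℝ) ≤ α - 1 := by linarith
      have p1 := mul_le_mul_of_nonneg_left (hc1 k) a1
      have p2 := mul_le_mul_of_nonneg_left (hc2 k) (le_of_lt hk1)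
      linarith
    have hB' := mul_le_mul_of_nonneg_left hB hq0
    have hexpand : q * ((α - 1) * F (k+1) + ((k:ℝ)+1) * (F (k+1) - F k)
          + (β (k+1) * h * ((k:ℝ)+1)) * ‖g (k+1)‖^2)
        = (α - 1) * q * F (k+1) + δ k * (F (k+1) - F k)
          + δ k * (β (k+1) * h) * ‖g (k+1)‖^2 := by
      rw [← hq]; ring
    rw [hexpand] at hB'
    have hD := hG3 k hk
    have hD2 : (α - 1) * δ k / ((k:ℝ)+1) = (α-1) * q := by rw [hqdef]; ring
    have hD' := mul_le_mul_of_nonneg_right hD (hF0 (k+1))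
    push_cast at hD'
    rw [hD2] at hD'
    have hnorm2 : ‖z (k+1)‖^2/2 - ‖z k‖^2/2 ≤ -q * (inner ℝ (z (k+1)) (g (k+1)) : ℝ) := by
      rw [← hin]; exact hnorm
    simp only [hE]
    linarith [hnorm2, hB', hD']
  have hE0 : ∀ k : ℕ, 1 ≤ k → 0 ≤ E k := by
    intro k hk
    simp only [hE]
    have h1 := mul_nonneg (le_of_lt (hδpos k hk)) (hF0 k)
    have h2 := sq_nonneg ‖z k‖
    linarith
  set a : ℕ → ℝ := fun k => δ k * β (k + 1) * ‖g (k + 1)‖ ^ 2 with ha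
  clear_value a
  have hann : ∀ i : ℕ, 0 ≤ a (i+1) := by
    intro i
    rw [ha]
    exact mul_nonneg (mul_nonneg (hδpos (i+1) (by omega)).le (hβnn _)) (sq_nonneg _)
  have hsum : ∀ n, ∑ i ∈ Finset.range n, a (i+1) ≤ E 1 / h := by
    intro n
    have htel : ∑ i ∈ Finset.range n, (h * a (i+1))
        ≤ ∑ i ∈ Finset.range n, (E (i+1) - E (i+2)) := by
      refine Finset.sum_le_sum (fun i _ => ?_)
      have := hstep (i+1) (by omega)
      simp only [ha] at this ⊢
      linarith
    have htel2 : ∑ i ∈ Finset.range n, (E (i+1) - E (i+2)) = E 1 - E (n+1) := by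
      have := Finset.sum_range_sub' (fun i => E (i+1)) n
      simpa using this
    have hEn := hE0 (n+1) (by omega)
    rw [le_div_iff₀ hh]
    have hmul : ∑ i ∈ Finset.range n, (h * a (i+1))
        = (∑ i ∈ Finset.range n, a (i+1)) * h := by
      rw [Finset.sum_mul]
      exact Finset.sum_congr rfl (fun i _ => mul_comm _ _)
    linarith
  have hsummable : Summable (fun i => a (i+1)) := summable_of_sum_range_le hann hsum
  have hfinal : (fun k => δ k * β (k + 1) * ‖gradient f (x (k + 1))‖ ^ 2) = a := by
    funext k
    rw [ha, hg]
  rw [hfinal]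
  exact (summable_nat_add_iff 1).mp hsummable
end

section
/- Let f : H → ℝ be lower semicontinuous and μ-strongly convex for some μ > 0, and let λ > 0. Then the Moreau envelope f_λ, defined by f_λ(x) = inf_{z ∈ H} ( f(z) + ‖z − x‖²/(2λ) ), is a real-valued function that is strongly convex with modulus μ/(1 + λμ). -/
open Real Set

/-- A lower semicontinuous convex real function on a normed space has a continuous
affine minorant. -/
lemma exists_affine_minorant {H : Type*} [NormedAddCommGroup H] [NormedSpace ℝ H]
    (g : H → ℝ) (hlsc : LowerSemicontinuous g) (hconv : ConvexOn ℝ Set.univ g) :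
    ∃ (ψ : H →L[ℝ] ℝ) (β : ℝ), ∀ z, ψ z + β ≤ g z := by
  have hE : Convex ℝ {p : H × ℝ | g p.1 ≤ p.2} := by
    have := hconv.convex_epigraph
    simpa using this
  have hC : IsClosed {p : H × ℝ | g p.1 ≤ p.2} := by
    have hl : LowerSemicontinuous (fun p : H × ℝ => g p.1 - p.2) := by
      exact (hlsc.comp continuous_fst).add
        ((continuous_snd.neg).lowerSemicontinuous)
    have := hl.isClosed_preimage 0
    convert this using 1
    ext p
    simp [sub_nonpos]
  have hp : ((0 : H), g 0 - 1) ∉ {p : H × ℝ | g p.1 ≤ p.2} := by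
    simp only [mem_setOf_eq, not_le]; linarith
  obtain ⟨φ, u, hpu, hEp⟩ := geometric_hahn_banach_point_closed hE hC hp
  set c : ℝ := φ ((0 : H), (1 : ℝ)) with hc
  have hsplit : ∀ (z : H) (t : ℝ), φ (z, t) = φ (z, 0) + t * c := by
    intro z t
    have : ((z, t) : H × ℝ) = (z, 0) + t • ((0 : H), (1 : ℝ)) := by
      simp [Prod.ext_iff]
    rw [this, map_add, map_smul, smul_eq_mul]
  have h1 : u < φ ((0 : H), g 0) := hEp _ (by simp)
  rw [hsplit] at h1 hpu
  have hcpos : 0 < c := by nlinarith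
  refine ⟨(-(c⁻¹)) • (φ.comp (ContinuousLinearMap.inl ℝ H ℝ)), u / c, fun z => ?_⟩
  have h2 : u < φ (z, g z) := hEp _ (by simp)
  rw [hsplit] at h2
  have h3 : (u - φ (z, 0)) / c ≤ g z := by
    rw [div_le_iff₀ hcpos]; nlinarith
  simp only [ContinuousLinearMap.smul_apply, ContinuousLinearMap.comp_apply,
    ContinuousLinearMap.inl_apply, smul_eq_mul]
  calc -c⁻¹ * φ (z, 0) + u / c = (u - φ (z, 0)) / c := by field_simp; ring
    _ ≤ g z := h3

lemma envelope_convexOn {H : Type*} [NormedAddCommGroup H] [NormedSpace ℝ H]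
    (g : H → ℝ) (hconv : ConvexOn ℝ Set.univ g) (A : ℝ) (hA : 0 ≤ A)
    (hbdd : ∀ y : H, BddBelow (Set.range fun z => g z + A * ‖z - y‖ ^ 2)) :
    ConvexOn ℝ Set.univ (fun y => ⨅ z : H, (g z + A * ‖z - y‖ ^ 2)) := by
  refine ⟨convex_univ, fun y₁ _ y₂ _ a b ha hb hab => ?_⟩
  have key : ∀ z₁ z₂ : H,
      (⨅ z : H, (g z + A * ‖z - (a • y₁ + b • y₂)‖ ^ 2))
        ≤ a * (g z₁ + A * ‖z₁ - y₁‖ ^ 2) + b * (g z₂ + A * ‖z₂ - y₂‖ ^ 2) := by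
    intro z₁ z₂
    have hz : g (a • z₁ + b • z₂) ≤ a * g z₁ + b * g z₂ :=
      hconv.2 (mem_univ z₁) (mem_univ z₂) ha hb hab
    have hrw : a • z₁ + b • z₂ - (a • y₁ + b • y₂) = a • (z₁ - y₁) + b • (z₂ - y₂) := by
      module
    have hn : ‖a • (z₁ - y₁) + b • (z₂ - y₂)‖ ≤ a * ‖z₁ - y₁‖ + b * ‖z₂ - y₂‖ := by
      refine (norm_add_le _ _).trans ?_
      rw [norm_smul, norm_smul, Real.norm_eq_abs, Real.norm_eq_abs,
        abs_of_nonneg ha, abs_of_nonneg hb]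
    have hsq : ‖a • (z₁ - y₁) + b • (z₂ - y₂)‖ ^ 2
        ≤ a * ‖z₁ - y₁‖ ^ 2 + b * ‖z₂ - y₂‖ ^ 2 := by
      nlinarith [norm_nonneg (a • (z₁ - y₁) + b • (z₂ - y₂)), norm_nonneg (z₁ - y₁),
        norm_nonneg (z₂ - y₂), mul_nonneg ha hb, sq_nonneg (‖z₁ - y₁‖ - ‖z₂ - y₂‖)]
    refine ciInf_le_of_le (hbdd _) (a • z₁ + b • z₂) ?_
    rw [hrw]
    nlinarith [mul_le_mul_of_nonneg_left hsq hA]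
  calc (⨅ z : H, (g z + A * ‖z - (a • y₁ + b • y₂)‖ ^ 2))
      ≤ (⨅ z : H, a * (g z + A * ‖z - y₁‖ ^ 2))
        + ⨅ z : H, b * (g z + A * ‖z - y₂‖ ^ 2) :=
        le_ciInf_add_ciInf fun z₁ z₂ => key z₁ z₂
    _ = a * (⨅ z : H, (g z + A * ‖z - y₁‖ ^ 2))
        + b * ⨅ z : H, (g z + A * ‖z - y₂‖ ^ 2) := by
        rw [← Real.mul_iInf_of_nonneg ha, ← Real.mul_iInf_of_nonneg hb]

/-- The Moreau envelope of a μ-strongly convex function is strongly convex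
with modulus μ/(1 + λμ). -/
theorem moreau_envelope_strongly_convex
    {H : Type*} [NormedAddCommGroup H] [InnerProductSpace ℝ H] [CompleteSpace H]
    (f : H → ℝ) (hlsc : LowerSemicontinuous f)
    (μ lam : ℝ) (hμ : 0 < μ) (hlam : 0 < lam)
    (hsc : ConvexOn ℝ Set.univ (fun z => f z - μ / 2 * ‖z‖ ^ 2)) :
    ConvexOn ℝ Set.univ
      (fun x => (⨅ z : H, (f z + ‖z - x‖ ^ 2 / (2 * lam)))
        - (μ / (1 + lam * μ)) / 2 * ‖x‖ ^ 2) := by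
  set g : H → ℝ := fun z => f z - μ / 2 * ‖z‖ ^ 2 with hg
  have h1μ : (0 : ℝ) < 1 + lam * μ := by positivity
  set A : ℝ := (1 + lam * μ) / (2 * lam) with hA
  set t : ℝ := 1 / (1 + lam * μ) with ht
  have hApos : 0 < A := by positivity
  -- g is lower semicontinuous
  have hglsc : LowerSemicontinuous g := by
    have : LowerSemicontinuous (fun z : H => f z + (-(μ / 2 * ‖z‖ ^ 2))) :=
      hlsc.add (Continuous.lowerSemicontinuous (by continuity))
    rw [hg]
    simpa [sub_eq_add_neg] using this
  obtain ⟨ψ, β, hψ⟩ := exists_affine_minorant g hglsc hsc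
  clear_value g A t
  -- uniform lower bounds
  have hbdd : ∀ y : H, BddBelow (Set.range fun z => g z + A * ‖z - y‖ ^ 2) := by
    intro y
    refine ⟨β - (2 * A * ‖y‖ + ‖ψ‖) ^ 2 / (4 * A), fun w hw => ?_⟩
    obtain ⟨z, rfl⟩ := hw
    have hψz : ψ z + β ≤ g z := hψ z
    have hψle : -(‖ψ‖ * ‖z‖) ≤ ψ z := by
      have h := ψ.le_opNorm z
      rw [Real.norm_eq_abs] at h
      nlinarith [neg_abs_le (ψ z)]
    have hnorm : (‖z‖ - ‖y‖) ^ 2 ≤ ‖z - y‖ ^ 2 := by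
      have h := abs_le.mp (abs_norm_sub_norm_le z y)
      exact sq_le_sq' h.1 h.2
    have hdiv : ‖ψ‖ * ‖z‖ - A * (‖z‖ - ‖y‖) ^ 2 ≤ (2 * A * ‖y‖ + ‖ψ‖) ^ 2 / (4 * A) := by
      rw [le_div_iff₀ (by positivity : (0:ℝ) < 4 * A)]
      nlinarith [sq_nonneg (2 * A * (‖z‖ - ‖y‖) - ‖ψ‖), sq_nonneg (A * ‖y‖)]
    show β - (2 * A * ‖y‖ + ‖ψ‖) ^ 2 / (4 * A) ≤ g z + A * ‖z - y‖ ^ 2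
    linarith [mul_le_mul_of_nonneg_left hnorm hApos.le, hdiv, hψz, hψle]
  -- pointwise identity
  have pid : ∀ (z x : H), f z + ‖z - x‖ ^ 2 / (2 * lam)
      = (g z + A * ‖z - t • x‖ ^ 2) + (μ / (1 + lam * μ)) / 2 * ‖x‖ ^ 2 := by
    intro z x
    have e1 : ‖z - x‖ ^ 2 = ‖z‖ ^ 2 - 2 * inner ℝ z x + ‖x‖ ^ 2 := norm_sub_sq_real z x
    have e2 : ‖z - t • x‖ ^ 2
        = ‖z‖ ^ 2 - 2 * (t * inner ℝ z x) + t ^ 2 * ‖x‖ ^ 2 := by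
      rw [norm_sub_sq_real, real_inner_smul_right, norm_smul, Real.norm_eq_abs,
        mul_pow, sq_abs]
    rw [e1, e2, hg, hA, ht]
    field_simp
    ring
  -- the function equals the composition of the envelope of g with x ↦ t • x
  have hfun : (fun x : H => (⨅ z : H, (f z + ‖z - x‖ ^ 2 / (2 * lam)))
        - (μ / (1 + lam * μ)) / 2 * ‖x‖ ^ 2)
      = fun x : H => ⨅ z : H, (g z + A * ‖z - t • x‖ ^ 2) := by
    funext x
    have h1 : (⨅ z : H, (f z + ‖z - x‖ ^ 2 / (2 * lam)))
        = (⨅ z : H, (g z + A * ‖z - t • x‖ ^ 2)) + (μ / (1 + lam * μ)) / 2 * ‖x‖ ^ 2 := by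
      have h2 := (OrderIso.addRight ((μ / (1 + lam * μ)) / 2 * ‖x‖ ^ 2)).map_ciInf
        (f := fun z : H => g z + A * ‖z - t • x‖ ^ 2) (hbdd (t • x))
      simp only [OrderIso.addRight_apply] at h2
      rw [h2]
      exact iInf_congr fun z => pid z x
    rw [h1]; ring
  rw [hfun]
  have hG := envelope_convexOn g hsc A hApos.le hbdd
  refine ⟨convex_univ, fun x _ y _ a b ha hb hab => ?_⟩
  have h3 := hG.2 (mem_univ (t • x)) (mem_univ (t • y)) ha hb hab
  have h4 : t • (a • x + b • y) = a • (t • x) + b • (t • y) := by module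
  simpa [h4] using h3
end

section
/- Let f : H → ℝ be a μ-strongly convex function of class C² with unique minimizer x*, let 0 ≤ β ≤ 1/(2√μ), and let x : [t₀,∞) → H be a twice continuously differentiable solution of ẍ(t) + 2√μ·ẋ(t) + β·∇²f(x(t))ẋ(t) + ∇f(x(t)) = 0. Then for all t ≥ t₀, (μ/2)‖x(t) − x*‖² ≤ f(x(t)) − min_H f ≤ C·e^{−(√μ/2)(t − t₀)}, where C := f(x(t₀)) − min_H f + μ‖x(t₀) − x*‖² + ‖ẋ(t₀) + β∇f(x(t₀))‖². -/
open Real Set InnerProductSpace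

local notation "⟪" x ", " y "⟫" => @inner ℝ _ _ x y

section Aux

variable {H : Type*} [NormedAddCommGroup H] [InnerProductSpace ℝ H] [CompleteSpace H]

lemma convex_grad_ineq_s15 (g : H → ℝ) (hg : ConvexOn ℝ Set.univ g)
    (a b G : H) (hG : HasGradientAt g G a) :
    g a + ⟪G, b - a⟫ ≤ g b := by
  set h : ℝ → H := fun τ => τ • (b - a) + a with hh
  have hconv : ConvexOn ℝ Set.univ (g ∘ h) := by
    have := hg.comp_affineMap (AffineMap.lineMap a b : ℝ →ᵃ[ℝ] H)
    have heq : (g ∘ h) = g ∘ ⇑(AffineMap.lineMap a b : ℝ →ᵃ[ℝ] H) := by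
      funext τ; simp [AffineMap.lineMap_apply, hh, vsub_eq_sub, vadd_eq_add]
    rw [heq]; exact this
  have hda : HasDerivAt h (b - a) 0 := by
    have := ((hasDerivAt_id (0:ℝ)).smul_const (b - a)).add_const a
    rw [one_smul] at this; exact this
  have h0 : h 0 = a := by simp [hh]
  have hder : HasDerivAt (g ∘ h) ⟪G, b - a⟫ 0 := by
    have hfd : HasFDerivAt g ((toDual ℝ H) G) (h 0) := by
      rw [h0]; exact hasGradientAt_iff_hasFDerivAt.mp hG
    have := hfd.comp_hasDerivAt 0 hda
    simpa [toDual_apply_apply] using this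
  have := hconv.le_slope_of_hasDerivAt (Set.mem_univ 0) (Set.mem_univ 1) one_pos hder
  have h1 : h 1 = b := by simp [hh]
  rw [slope_def_field] at this
  simp only [Function.comp, h0, h1] at this
  simp only [div_one, sub_zero] at this ⊢
  linarith [this]

lemma sq_norm_hasGradientAt (μ : ℝ) (a : H) :
    HasGradientAt (fun z : H => μ / 2 * ‖z‖ ^ 2) (μ • a) a := by
  rw [hasGradientAt_iff_hasFDerivAt]
  have h0 : HasFDerivAt (fun z : H => ⟪z, z⟫)
      ((fderivInnerCLM ℝ (a, a)).comp
        ((ContinuousLinearMap.id ℝ H).prod (ContinuousLinearMap.id ℝ H))) a :=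
    (hasFDerivAt_id a).inner ℝ (hasFDerivAt_id a)
  have h1 : HasFDerivAt (fun z : H => μ / 2 * ‖z‖ ^ 2)
      ((μ / 2) • ((fderivInnerCLM ℝ (a, a)).comp
        ((ContinuousLinearMap.id ℝ H).prod (ContinuousLinearMap.id ℝ H)))) a := by
    have := h0.const_smul (μ / 2)
    have heq : (fun z : H => μ / 2 * ‖z‖ ^ 2) = fun z : H => (μ / 2) • ⟪z, z⟫ := by
      funext z; simp [real_inner_self_eq_norm_sq, smul_eq_mul]
    rw [heq]
    exact this
  have e : (toDual ℝ H) (μ • a) = (μ / 2) • ((fderivInnerCLM ℝ (a, a)).comp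
        ((ContinuousLinearMap.id ℝ H).prod (ContinuousLinearMap.id ℝ H))) := by
    ext v
    simp [toDual_apply_apply, fderivInnerCLM_apply, inner_smul_left, real_inner_comm]
    ring
  rw [e]; exact h1

lemma strong_convex_grad_ineq (f : H → ℝ) (hf : Differentiable ℝ f) (μ : ℝ)
    (hsc : ConvexOn ℝ Set.univ (fun z => f z - μ / 2 * ‖z‖ ^ 2)) (a b : H) :
    f a + ⟪gradient f a, b - a⟫ + μ / 2 * ‖b - a‖ ^ 2 ≤ f b := by
  have hGf : HasGradientAt f (gradient f a) a := (hf a).hasGradientAt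
  have hGs : HasGradientAt (fun z => f z - μ / 2 * ‖z‖ ^ 2) (gradient f a - μ • a) a := by
    rw [hasGradientAt_iff_hasFDerivAt] at *
    have := hGf.sub (hasGradientAt_iff_hasFDerivAt.mp (sq_norm_hasGradientAt μ a))
    rw [map_sub]; exact this
  have key := convex_grad_ineq_s15 _ hsc a b _ hGs
  have e1 : ‖b - a‖ ^ 2 = ‖b‖ ^ 2 - 2 * ⟪a, b⟫ + ‖a‖ ^ 2 := by
    rw [norm_sub_sq_real, real_inner_comm]
  have e2 : ⟪gradient f a - μ • a, b - a⟫
      = ⟪gradient f a, b - a⟫ - μ * (⟪a, b⟫ - ⟪a, a⟫) := by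
    simp [inner_sub_left, inner_smul_left, inner_sub_right]
    ring
  have e3 : ⟪a, a⟫ = ‖a‖ ^ 2 := real_inner_self_eq_norm_sq a
  rw [e2, e3] at key
  rw [e1]
  linarith [key]

lemma inner_expand1 (s β : ℝ) (u gg w : H) :
    ⟪gg, u⟫ + 1/2 * (⟪u + β • gg + s • w, -(s • u) - gg⟫ + ⟪-(s • u) - gg, u + β • gg + s • w⟫)
    = -s*‖u‖^2 - s*β*⟪u, gg⟫ - β*‖gg‖^2 - s^2*⟪u, w⟫ - s*⟪gg, w⟫ := by
  simp only [inner_add_left, inner_add_right, inner_sub_left, inner_sub_right, inner_neg_left,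
    inner_neg_right, real_inner_smul_left, real_inner_smul_right,
    real_inner_self_eq_norm_sq, norm_smul, Real.norm_eq_abs, mul_pow, sq_abs]
  simp only [real_inner_comm gg u, real_inner_comm w u, real_inner_comm w gg]
  ring

lemma inner_expand2 (s β : ℝ) (u gg w : H) :
    ⟪u + β • gg + s • w, u + β • gg + s • w⟫
    = ‖u‖^2 + β^2*‖gg‖^2 + s^2*‖w‖^2 + 2*β*⟪u, gg⟫ + 2*s*⟪u, w⟫ + 2*s*β*⟪gg, w⟫ := by
  simp only [inner_add_left, inner_add_right, real_inner_smul_left, real_inner_smul_right,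
    real_inner_self_eq_norm_sq, norm_smul, Real.norm_eq_abs, mul_pow, sq_abs]
  simp only [real_inner_comm gg u, real_inner_comm w u, real_inner_comm w gg]
  ring

lemma inner_expand3 (s : ℝ) (a w : H) :
    ⟪a + s • w, a + s • w⟫ = ‖a‖^2 + 2*s*⟪a, w⟫ + s^2*‖w‖^2 := by
  simp only [inner_add_left, inner_add_right, real_inner_smul_left, real_inner_smul_right,
    real_inner_self_eq_norm_sq, norm_smul, Real.norm_eq_abs, mul_pow, sq_abs]
  rw [real_inner_comm w a]; ring

lemma key_ineq (s β A U G D p q r : ℝ) (hs : 0 < s) (hβ : 0 ≤ β) (hb : s*β ≤ 1/2)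
    (hp : -(U*G) ≤ p) (hq : -(U*D) ≤ q) (hr : r ≤ G*D)
    (hA1 : A + s^2/2*D^2 ≤ r) (hA2 : s^2/2*D^2 ≤ A) :
    (-s*U^2 - s*β*p - β*G^2 - s^2*q - s*r)
      + s/2*(A + 1/2*(U^2 + β^2*G^2 + s^2*D^2 + 2*β*p + 2*s*q + 2*s*β*r)) ≤ 0 := by
  nlinarith [mul_le_mul_of_nonneg_left hA1 hs.le,
    mul_le_mul_of_nonneg_left hA2 (by positivity : (0:ℝ) ≤ s/2),
    mul_le_mul_of_nonneg_left hp (by positivity : (0:ℝ) ≤ s*β/2),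
    mul_le_mul_of_nonneg_left hq (by positivity : (0:ℝ) ≤ s^2/2),
    mul_le_mul_of_nonneg_left hr (by positivity : (0:ℝ) ≤ s^2*β/2),
    mul_nonneg hs.le (sq_nonneg (β*G - U)),
    mul_nonneg hs.le (sq_nonneg (U - s*D)),
    mul_nonneg hs.le (sq_nonneg (β*G - s*D)),
    mul_nonneg (mul_nonneg hβ (by linarith : (0:ℝ) ≤ 1/2 - s*β)) (sq_nonneg G),
    mul_nonneg hs.le (sq_nonneg U)]

end Aux

set_option maxHeartbeats 1000000 in
/-- Theorem 4.1 (i): exponential convergence of the values for the strongly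
convex inertial dynamic with Hessian driven damping. -/
theorem din_strongly_convex_exponential_value_rate
    {H : Type*} [NormedAddCommGroup H] [InnerProductSpace ℝ H] [CompleteSpace H]
    (f : H → ℝ) (hf : ContDiff ℝ 2 f)
    (μ : ℝ) (hμ : 0 < μ)
    (hsc : ConvexOn ℝ Set.univ (fun z => f z - μ / 2 * ‖z‖ ^ 2))
    (xstar : H) (hmin : ∀ y, f xstar ≤ f y)
    (β : ℝ) (hβ0 : 0 ≤ β) (hβ : β ≤ 1 / (2 * Real.sqrt μ))
    (t₀ : ℝ) (ht₀ : 0 < t₀)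
    (x x' x'' : ℝ → H)
    (hx' : ∀ t ≥ t₀, HasDerivAt x (x' t) t)
    (hx'' : ∀ t ≥ t₀, HasDerivAt x' (x'' t) t)
    (hx''cont : ContinuousOn x'' (Set.Ici t₀))
    (hode : ∀ t ≥ t₀,
      x'' t + (2 * Real.sqrt μ) • x' t
        + β • (fderiv ℝ (gradient f) (x t)) (x' t) + gradient f (x t) = 0) :
    ∀ t ≥ t₀,
      μ / 2 * ‖x t - xstar‖ ^ 2 ≤ f (x t) - f xstar ∧
      f (x t) - f xstar ≤
        (f (x t₀) - f xstar + μ * ‖x t₀ - xstar‖ ^ 2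
            + ‖x' t₀ + β • gradient f (x t₀)‖ ^ 2) *
          Real.exp (-(Real.sqrt μ / 2) * (t - t₀)) := by
  set s := Real.sqrt μ with hsdef
  have hs : 0 < s := Real.sqrt_pos.mpr hμ
  have hs2 : s ^ 2 = μ := Real.sq_sqrt hμ.le
  have hβs : s * β ≤ 1 / 2 := by
    have := mul_le_mul_of_nonneg_left hβ hs.le
    rwa [mul_one_div, mul_comm 2 s, div_mul_eq_div_div, div_self hs.ne'] at this
  have hdiff : Differentiable ℝ f := hf.differentiable (by norm_num)
  have hfd1 : ContDiff ℝ 1 (fderiv ℝ f) := hf.fderiv_right (by norm_num)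
  have hgc : ContDiff ℝ 1 (gradient f) := by
    have : gradient f = fun z => (toDual ℝ H).symm (fderiv ℝ f z) := rfl
    rw [this]
    exact (toDual ℝ H).symm.contDiff.comp hfd1
  have hgraddiff : Differentiable ℝ (gradient f) := hgc.differentiable (by norm_num)
  have hgrad0 : gradient f xstar = 0 := by
    have hloc : IsLocalMin f xstar := Filter.Eventually.of_forall hmin
    have : fderiv ℝ f xstar = 0 := hloc.fderiv_eq_zero
    show (toDual ℝ H).symm (fderiv ℝ f xstar) = 0
    rw [this, map_zero]
  have hSC := strong_convex_grad_ineq f hdiff μ hsc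
  have part1 : ∀ z : H, μ / 2 * ‖z - xstar‖ ^ 2 ≤ f z - f xstar := by
    intro z
    have := hSC xstar z
    rw [hgrad0] at this
    simp only [inner_zero_left] at this
    linarith
  have hglow : ∀ z : H, f z - f xstar + μ / 2 * ‖z - xstar‖ ^ 2
      ≤ ⟪gradient f z, z - xstar⟫ := by
    intro z
    have := hSC z xstar
    have h1 : (xstar - z : H) = -(z - xstar) := by abel
    rw [h1, inner_neg_right, norm_neg] at this
    linarith
  set g : ℝ → H := fun t => gradient f (x t) with hgdef
  set w : ℝ → H := fun t => x t - xstar with hwdef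
  set v : ℝ → H := fun t => x' t + β • g t + s • w t with hvdef
  set E : ℝ → ℝ := fun t => f (x t) - f xstar + 1/2 * ⟪v t, v t⟫ with hEdef
  set Ed : ℝ → ℝ := fun t =>
    -s*‖x' t‖^2 - s*β*⟪x' t, g t⟫ - β*‖g t‖^2 - s^2*⟪x' t, w t⟫ - s*⟪g t, w t⟫ with hEddef
  -- derivative of v
  have hvd : ∀ t ≥ t₀, HasDerivAt v (-(s • x' t) - g t) t := by
    intro t ht
    have hgd : HasDerivAt (fun τ => gradient f (x τ))
        ((fderiv ℝ (gradient f) (x t)) (x' t)) t :=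
      (hgraddiff (x t)).hasFDerivAt.comp_hasDerivAt t (hx' t ht)
    have hwd : HasDerivAt (fun τ => x τ - xstar) (x' t) t := (hx' t ht).sub_const xstar
    have h := ((hx'' t ht).add (hgd.const_smul β)).add (hwd.const_smul s)
    have heq : x'' t + β • (fderiv ℝ (gradient f) (x t)) (x' t) + s • x' t
        = -(s • x' t) - g t := by
      have hob := hode t ht
      rw [hgdef]
      dsimp only
      linear_combination (norm := module) hob
    rw [heq] at h
    exact h
  -- derivative of E
  have hEd : ∀ t ≥ t₀, HasDerivAt E (Ed t) t := by
    intro t ht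
    have hfdc : HasDerivAt (fun τ => f (x τ)) ⟪g t, x' t⟫ t := by
      have hF : HasFDerivAt f ((toDual ℝ H) (gradient f (x t))) (x t) :=
        hasGradientAt_iff_hasFDerivAt.mp (hdiff (x t)).hasGradientAt
      have := hF.comp_hasDerivAt t (hx' t ht)
      rw [toDual_apply_apply] at this; exact this
    have hvv : HasDerivAt (fun τ => ⟪v τ, v τ⟫)
        (⟪v t, -(s • x' t) - g t⟫ + ⟪-(s • x' t) - g t, v t⟫) t :=
      (hvd t ht).inner ℝ (hvd t ht)
    have h := (hfdc.sub_const (f xstar)).add (hvv.const_mul (1/2))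
    have hval : ⟪g t, x' t⟫ + 1/2 * (⟪v t, -(s • x' t) - g t⟫ + ⟪-(s • x' t) - g t, v t⟫)
        = Ed t := by
      rw [hEddef, hvdef]
      dsimp only
      exact inner_expand1 s β (x' t) (g t) (w t)
    rw [← hval]
    exact h
  -- key differential inequality
  have hkey : ∀ t ≥ t₀, Ed t + s/2 * E t ≤ 0 := by
    intro t ht
    have e2 : ⟪v t, v t⟫ = ‖x' t‖^2 + β^2*‖g t‖^2 + s^2*‖w t‖^2
        + 2*β*⟪x' t, g t⟫ + 2*s*⟪x' t, w t⟫ + 2*s*β*⟪g t, w t⟫ := by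
      rw [hvdef]
      exact inner_expand2 s β (x' t) (g t) (w t)
    have hA1 : (f (x t) - f xstar) + s^2/2 * ‖w t‖^2 ≤ ⟪g t, w t⟫ := by
      have := hglow (x t)
      rw [← hs2] at this
      simpa [hgdef, hwdef] using this
    have hA2 : s^2/2 * ‖w t‖^2 ≤ f (x t) - f xstar := by
      have := part1 (x t)
      rw [← hs2] at this
      simpa [hwdef] using this
    have hp : -(‖x' t‖ * ‖g t‖) ≤ ⟪x' t, g t⟫ :=
      (abs_le.mp (abs_real_inner_le_norm _ _)).1
    have hq : -(‖x' t‖ * ‖w t‖) ≤ ⟪x' t, w t⟫ :=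
      (abs_le.mp (abs_real_inner_le_norm _ _)).1
    have hr : ⟪g t, w t⟫ ≤ ‖g t‖ * ‖w t‖ := real_inner_le_norm _ _
    have hk := key_ineq s β (f (x t) - f xstar) ‖x' t‖ ‖g t‖ ‖w t‖
      ⟪x' t, g t⟫ ⟪x' t, w t⟫ ⟪g t, w t⟫ hs hβ0 hβs hp hq hr hA1 hA2
    rw [hEddef, hEdef]
    dsimp only
    rw [e2]
    linarith [hk]
  -- Gronwall / monotonicity argument
  set φ : ℝ → ℝ := fun t => E t * Real.exp (s/2 * t) with hφdef
  have hφd : ∀ t ≥ t₀, HasDerivAt φ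
      (Ed t * Real.exp (s/2*t) + E t * (Real.exp (s/2*t) * (s/2))) t := by
    intro t ht
    have h1 : HasDerivAt (fun τ : ℝ => s/2*τ) (s/2) t := by
      simpa using (hasDerivAt_id t).const_mul (s/2)
    have hexp : HasDerivAt (fun τ => Real.exp (s/2*τ)) (Real.exp (s/2*t) * (s/2)) t := h1.exp
    exact (hEd t ht).mul hexp
  have hanti : AntitoneOn φ (Set.Ici t₀) := by
    apply antitoneOn_of_deriv_nonpos (convex_Ici t₀)
    · intro t ht
      exact (hφd t ht).continuousAt.continuousWithinAt
    · rw [interior_Ici]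
      intro t ht
      exact (hφd t (le_of_lt ht)).differentiableAt.differentiableWithinAt
    · rw [interior_Ici]
      intro t ht
      rw [(hφd t (le_of_lt ht)).deriv]
      have hk := hkey t (le_of_lt ht)
      have he : (0:ℝ) < Real.exp (s/2*t) := Real.exp_pos _
      nlinarith [hk, he, mul_nonpos_of_nonpos_of_nonneg hk he.le]
  -- conclusion
  intro t ht
  refine ⟨part1 (x t), ?_⟩
  have hmono : φ t ≤ φ t₀ := hanti (Set.self_mem_Ici) ht ht
  have hvpos : (0:ℝ) ≤ ⟪v t, v t⟫ := real_inner_self_nonneg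
  have hfE : f (x t) - f xstar ≤ E t := by
    rw [hEdef]; dsimp only; linarith
  have hEt : E t ≤ E t₀ * Real.exp (-(s/2)*(t - t₀)) := by
    have hexp : (0:ℝ) < Real.exp (s/2*t) := Real.exp_pos _
    have hm : E t * Real.exp (s/2*t) ≤ E t₀ * Real.exp (s/2*t₀) := hmono
    rw [show (-(s/2)*(t-t₀)) = s/2*t₀ - s/2*t by ring, Real.exp_sub, ← mul_div_assoc,
      le_div_iff₀ hexp]
    exact hm
  have hE0 : E t₀ ≤ f (x t₀) - f xstar + μ * ‖x t₀ - xstar‖^2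
      + ‖x' t₀ + β • gradient f (x t₀)‖^2 := by
    have hgg : g t₀ = gradient f (x t₀) := rfl
    have hww : w t₀ = x t₀ - xstar := rfl
    have hv0 : v t₀ = (x' t₀ + β • gradient f (x t₀)) + s • (x t₀ - xstar) := rfl
    have hexp2 : ⟪v t₀, v t₀⟫ = ‖x' t₀ + β • gradient f (x t₀)‖^2
        + 2*s*⟪x' t₀ + β • gradient f (x t₀), x t₀ - xstar⟫
        + s^2*‖x t₀ - xstar‖^2 := by
      rw [hv0]; exact inner_expand3 s _ _
    have hcs := (abs_le.mp (abs_real_inner_le_norm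
      (x' t₀ + β • gradient f (x t₀)) (x t₀ - xstar))).2
    rw [hEdef]
    dsimp only
    rw [hexp2, ← hs2]
    nlinarith [mul_le_mul_of_nonneg_left hcs hs.le,
      sq_nonneg (‖x' t₀ + β • gradient f (x t₀)‖ - s*‖x t₀ - xstar‖)]
  have hC : f (x t) - f xstar ≤ (f (x t₀) - f xstar + μ * ‖x t₀ - xstar‖^2
      + ‖x' t₀ + β • gradient f (x t₀)‖^2) * Real.exp (-(s/2)*(t - t₀)) := by
    calc f (x t) - f xstar ≤ E t := hfE
    _ ≤ E t₀ * Real.exp (-(s/2)*(t - t₀)) := hEt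
    _ ≤ _ := mul_le_mul_of_nonneg_right hE0 (Real.exp_pos _).le
  exact hC
end

section
/- Let f : H → ℝ be a μ-strongly convex function of class C² with unique minimizer x*, let 0 ≤ β ≤ 1/(2√μ), and let x : [t₀,∞) → H be a twice continuously differentiable solution of ẍ(t) + 2√μ·ẋ(t) + β·∇²f(x(t))ẋ(t) + ∇f(x(t)) = 0. Then there exists a constant C₁ > 0 such that for all t ≥ t₀, e^{−√μ·t} ∫_{t₀}^{t} e^{√μ·s} ‖∇f(x(s))‖² ds ≤ C₁·e^{−(√μ/2)t}; moreover ∫_{t₀}^{∞} e^{(√μ/2)t} ‖ẋ(t)‖² dt < +∞. -/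
open Real Set

set_option maxHeartbeats 1000000

section Aux

lemma din_key_scalar (s β a b g F p1 p2 p3 : ℝ) (hs : 0 < s) (hβ0 : 0 ≤ β) (hβ : s*β ≤ 1/2)
    (ha : 0 ≤ a) (hb : 0 ≤ b) (hg : 0 ≤ g) (hF0 : 0 ≤ F)
    (hSC1 : F + s^2/2 * a^2 ≤ p2) (hSC2 : s^2/2 * a^2 ≤ F)
    (hp1 : -(a*b) ≤ p1) (hp3 : -(b*g) ≤ p3) :
    (- s^2*p1 - s*b^2 - s*β*p3 - s*p2 - β*g^2)
      + (s/2) * (F + 1/2*(s^2*a^2 + b^2 + β^2*g^2 + 2*s*p1 + 2*s*β*p2 + 2*β*p3))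
    ≤ -(3*s/16) * b^2 := by
  have c1 : (0:ℝ) ≤ s - s^2*β/2 := by nlinarith
  have h1 : 0 ≤ (s - s^2*β/2) * (p2 - F - s^2/2*a^2) := mul_nonneg c1 (by linarith)
  have c2 : (0:ℝ) ≤ s/2 - s^2*β/2 := by nlinarith
  have h2 : 0 ≤ (s/2 - s^2*β/2) * (F - s^2/2*a^2) := mul_nonneg c2 (by linarith)
  have h3 : 0 ≤ (s/4) * (s*a - b)^2 := by positivity
  have h4 : 0 ≤ (β/8) * (2*g - s*b)^2 := by positivity
  have c3 : (0:ℝ) ≤ 1/2 - s*β := by linarith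
  have h5 : 0 ≤ (1/2 - s*β) * (s * b^2) := mul_nonneg c3 (by positivity)
  have h6 : 0 ≤ (1/2 - s*β) * (s^3 * a^2) := mul_nonneg c3 (by positivity)
  have h7 : 0 ≤ (1/2 - s*β) * (β * g^2) := mul_nonneg c3 (by positivity)
  have hC : 0 ≤ s^2/2 * (p1 + a*b) := mul_nonneg (by positivity) (by linarith)
  have hD : 0 ≤ s*β/2 * (p3 + b*g) := mul_nonneg (by positivity) (by linarith)
  nlinarith [h1, h2, h3, h4, h5, h6, h7, hC, hD]

variable {H : Type*} [NormedAddCommGroup H] [InnerProductSpace ℝ H]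

local notation "⟪" x ", " y "⟫" => @inner ℝ _ _ x y

omit [InnerProductSpace ℝ H] in
lemma din_dummy : True := trivial

lemma din_energy_decay (s β : ℝ) (hs : 0 < s) (hβ0 : 0 ≤ β) (hβ : s*β ≤ 1/2)
    (X W G : H) (F : ℝ) (hF0 : 0 ≤ F)
    (hSC1 : F + s^2/2*‖X‖^2 ≤ ⟪G, X⟫) (hSC2 : s^2/2*‖X‖^2 ≤ F) :
    ⟪G, W⟫ + ⟪-(s•W) - G, s•X + W + β•G⟫ + (s/2)*(F + 1/2*‖s•X + W + β•G‖^2)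
      ≤ -(3*s/16)*‖W‖^2 := by
  have e1 : ⟪G, W⟫ + ⟪-(s•W) - G, s•X + W + β•G⟫
      = - s^2*⟪X,W⟫ - s*‖W‖^2 - s*β*⟪W,G⟫ - s*⟪G,X⟫ - β*‖G‖^2 := by
    simp only [inner_add_right, inner_sub_left, inner_neg_left, real_inner_smul_left,
      real_inner_smul_right, real_inner_self_eq_norm_sq, real_inner_comm W G,
      real_inner_comm X W, real_inner_comm X G]
    ring
  have e2 : ‖s•X + W + β•G‖^2
      = s^2*‖X‖^2 + ‖W‖^2 + β^2*‖G‖^2 + 2*s*⟪X,W⟫ + 2*s*β*⟪G,X⟫ + 2*β*⟪W,G⟫ := by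
    rw [← real_inner_self_eq_norm_sq]
    simp only [inner_add_right, inner_add_left, real_inner_smul_left,
      real_inner_smul_right, real_inner_self_eq_norm_sq, real_inner_comm W G,
      real_inner_comm X W, real_inner_comm X G, norm_smul, mul_pow, Real.norm_eq_abs, sq_abs]
    ring
  rw [e1, e2]
  have hp1 : -(‖X‖*‖W‖) ≤ ⟪X,W⟫ := by
    have := abs_real_inner_le_norm X W; linarith [neg_abs_le ⟪X,W⟫]
  have hp3 : -(‖W‖*‖G‖) ≤ ⟪W,G⟫ := by
    have := abs_real_inner_le_norm W G; linarith [neg_abs_le ⟪W,G⟫]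
  have := din_key_scalar s β ‖X‖ ‖W‖ ‖G‖ F ⟪X,W⟫ ⟪G,X⟫ ⟪W,G⟫ hs hβ0 hβ
    (norm_nonneg _) (norm_nonneg _) (norm_nonneg _) hF0 hSC1 hSC2 hp1 hp3
  linarith

omit [InnerProductSpace ℝ H] in
lemma din_dummy2 : True := trivial

/-- Convex differentiable function lies above its tangent. -/
lemma din_convex_tangent_le {g : H → ℝ} (hg : ConvexOn ℝ univ g) {p : H} {g' : H →L[ℝ] ℝ}
    (hd : HasFDerivAt g g' p) (q : H) : g p + g' (q - p) ≤ g q := by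
  have hline : ∀ s : ℝ, (AffineMap.lineMap p q : ℝ →ᵃ[ℝ] H) s = p + s • (q - p) := by
    intro s; rw [AffineMap.lineMap_apply_module]; module
  have hφc : ConvexOn ℝ univ (fun s : ℝ => g (p + s • (q - p))) := by
    have h := hg.comp_affineMap (AffineMap.lineMap p q : ℝ →ᵃ[ℝ] H)
    have h2 : (g ∘ (AffineMap.lineMap p q : ℝ →ᵃ[ℝ] H)) = fun s : ℝ => g (p + s • (q - p)) := by
      funext s; simp [Function.comp, hline s]
    rw [h2] at h
    simpa using h
  have hder : HasDerivAt (fun s : ℝ => g (p + s • (q - p))) (g' (q - p)) 0 := by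
    have h1 : HasDerivAt (fun s : ℝ => p + s • (q - p)) (q - p) 0 := by
      simpa using ((hasDerivAt_id (0:ℝ)).smul_const (q - p)).const_add p
    have hd' : HasFDerivAt g g' (p + (0:ℝ) • (q - p)) := by simpa using hd
    have := hd'.comp_hasDerivAt (x := (0:ℝ)) h1
    exact this
  have h3 := hφc.le_slope_of_hasDerivAt (mem_univ 0) (mem_univ 1) zero_lt_one hder
  rw [slope_def_field] at h3
  simp only [one_smul, zero_smul, add_zero] at h3
  have h2 : p + (q - p) = q := by abel
  rw [h2] at h3
  have h4 : g' (q - p) ≤ g q - g p := by simpa using h3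
  linarith

variable [CompleteSpace H]

lemma din_sc_ineq {f : H → ℝ} (hf : ContDiff ℝ 2 f) {μ : ℝ}
    (hsc : ConvexOn ℝ Set.univ (fun z => f z - μ / 2 * ‖z‖ ^ 2)) (p q : H) :
    f p + ⟪gradient f p, q - p⟫ + μ / 2 * ‖q - p‖ ^ 2 ≤ f q := by
  have hfd : HasFDerivAt f (fderiv ℝ f p) p :=
    (hf.differentiable (by norm_num) p).hasFDerivAt
  have hq : HasFDerivAt (fun z : H => μ / 2 * ‖z‖ ^ 2) ((μ/2) • (2 • innerSL ℝ p)) p :=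
    ((hasStrictFDerivAt_norm_sq p).hasFDerivAt).const_mul (μ/2)
  have hgd : HasFDerivAt (fun z => f z - μ / 2 * ‖z‖ ^ 2)
      (fderiv ℝ f p - (μ/2) • (2 • innerSL ℝ p)) p := hfd.sub hq
  have key := din_convex_tangent_le hsc hgd q
  have e1 : (fderiv ℝ f p) (q - p) = ⟪gradient f p, q - p⟫ := by
    rw [gradient, InnerProductSpace.toDual_symm_apply]
  have e2 : ((μ/2) • (2 • innerSL ℝ p)) (q - p) = μ * (⟪p, q⟫ - ‖p‖^2) := by
    simp [innerSL_apply_apply, inner_sub_right, real_inner_self_eq_norm_sq]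
    ring
  rw [ContinuousLinearMap.sub_apply, e1, e2] at key
  have e3 : ‖q - p‖ ^ 2 = ‖q‖ ^ 2 - 2 * ⟪q, p⟫ + ‖p‖ ^ 2 := norm_sub_sq_real q p
  have e4 : ⟪q, p⟫ = ⟪p, q⟫ := real_inner_comm p q
  rw [e3, e4]; linarith

end Aux

/-- Theorem 4.1 (ii): exponential decay (in average) of the gradients and
integrability of the speed for the strongly convex inertial dynamic. -/
theorem din_strongly_convex_exponential_gradient_rate
    {H : Type*} [NormedAddCommGroup H] [InnerProductSpace ℝ H] [CompleteSpace H]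
    (f : H → ℝ) (hf : ContDiff ℝ 2 f)
    (μ : ℝ) (hμ : 0 < μ)
    (hsc : ConvexOn ℝ Set.univ (fun z => f z - μ / 2 * ‖z‖ ^ 2))
    (xstar : H) (hmin : ∀ y, f xstar ≤ f y)
    (β : ℝ) (hβ0 : 0 ≤ β) (hβ : β ≤ 1 / (2 * Real.sqrt μ))
    (t₀ : ℝ) (ht₀ : 0 < t₀)
    (x x' x'' : ℝ → H)
    (hx' : ∀ t ≥ t₀, HasDerivAt x (x' t) t)
    (hx'' : ∀ t ≥ t₀, HasDerivAt x' (x'' t) t)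
    (hx''cont : ContinuousOn x'' (Set.Ici t₀))
    (hode : ∀ t ≥ t₀,
      x'' t + (2 * Real.sqrt μ) • x' t
        + β • (fderiv ℝ (gradient f) (x t)) (x' t) + gradient f (x t) = 0) :
    (∃ C₁ > 0, ∀ t ≥ t₀,
        Real.exp (-Real.sqrt μ * t) *
            (∫ u in t₀..t, Real.exp (Real.sqrt μ * u) * ‖gradient f (x u)‖ ^ 2)
          ≤ C₁ * Real.exp (-(Real.sqrt μ / 2) * t)) ∧
      MeasureTheory.IntegrableOn
        (fun t => Real.exp ((Real.sqrt μ / 2) * t) * ‖x' t‖ ^ 2)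
        (Set.Ici t₀) := by
  classical
  set s : ℝ := Real.sqrt μ with hsdef
  have hs : 0 < s := Real.sqrt_pos.2 hμ
  have hss : s^2 = μ := Real.sq_sqrt hμ.le
  have hsβ : s * β ≤ 1/2 := by
    have h1 := mul_le_mul_of_nonneg_left hβ hs.le
    have h2 : s * (1/(2*s)) = 1/2 := by field_simp
    linarith
  have hgrad1 : ContDiff ℝ 1 (gradient f) := by
    have h2 : ContDiff ℝ 1 (fderiv ℝ f) := hf.fderiv_right (by norm_num)
    exact (InnerProductSpace.toDual ℝ H).symm.contDiff.comp h2
  have hgd : Differentiable ℝ (gradient f) := hgrad1.differentiable one_ne_zero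
  have hfd : Differentiable ℝ f := hf.differentiable (by norm_num)
  have hgstar : gradient f xstar = 0 := by
    have hloc : IsLocalMin f xstar := Filter.Eventually.of_forall (fun y => hmin y)
    rw [gradient, hloc.fderiv_eq_zero]
    simp
  -- strong convexity consequences
  have hsc1 : ∀ p : H, (f p - f xstar) + s^2/2 * ‖p - xstar‖^2
      ≤ @inner ℝ _ _ (gradient f p) (p - xstar) := by
    intro p
    have h := din_sc_ineq hf hsc p xstar
    have e0 : xstar - p = -(p - xstar) := by abel
    rw [e0, inner_neg_right, norm_neg, ← hss] at h
    linarith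
  have hsc2 : ∀ p : H, s^2/2 * ‖p - xstar‖^2 ≤ f p - f xstar := by
    intro p
    have h := din_sc_ineq hf hsc xstar p
    rw [hgstar, inner_zero_left, ← hss] at h
    have e0 : p - xstar = p - xstar := rfl
    linarith
  obtain ⟨v, hvdef⟩ : ∃ v : ℝ → H, v = fun t => s • (x t - xstar) + x' t + β • gradient f (x t) := ⟨_, rfl⟩
  obtain ⟨E, hEdef⟩ : ∃ E : ℝ → ℝ, E = fun t => f (x t) - f xstar + (1/2) * ‖v t‖^2 := ⟨_, rfl⟩
  obtain ⟨dE, hdEdef⟩ : ∃ dE : ℝ → ℝ, dE = fun t => @inner ℝ _ _ (gradient f (x t)) (x' t)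
      + @inner ℝ _ _ (-(s • x' t) - gradient f (x t)) (v t) := ⟨_, rfl⟩
  have hEnn : ∀ t, 0 ≤ E t := by
    intro t
    simp only [hEdef]
    have := hmin (x t)
    have h2 : (0:ℝ) ≤ (1/2) * ‖v t‖^2 := by positivity
    linarith
  -- derivative of the energy
  have hEd : ∀ t ≥ t₀, HasDerivAt E (dE t) t := by
    intro t ht
    have hGd : HasDerivAt (fun u => gradient f (x u))
        ((fderiv ℝ (gradient f) (x t)) (x' t)) t :=
      (hgd (x t)).hasFDerivAt.comp_hasDerivAt t (hx' t ht)
    have hvd : HasDerivAt v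
        (s • x' t + x'' t + β • (fderiv ℝ (gradient f) (x t)) (x' t)) t := by
      rw [hvdef]
      exact ((((hx' t ht).sub_const xstar).const_smul s).add (hx'' t ht)).add
        (hGd.const_smul β)
    have veq : s • x' t + x'' t + β • (fderiv ℝ (gradient f) (x t)) (x' t)
        = -(s • x' t) - gradient f (x t) := by
      have h := hode t ht
      have h2 : (2*s) • x' t = s • x' t + s • x' t := by rw [two_mul, add_smul]
      rw [h2] at h
      have h3 : s • x' t + x'' t + β • (fderiv ℝ (gradient f) (x t)) (x' t)
          + (s • x' t + gradient f (x t)) = 0 := by rw [← h]; abel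
      have h4 := eq_neg_of_add_eq_zero_left h3
      rw [h4]; abel
    have hvd' : HasDerivAt v (-(s • x' t) - gradient f (x t)) t := veq ▸ hvd
    have hfxd : HasDerivAt (fun u => f (x u))
        (@inner ℝ _ _ (gradient f (x t)) (x' t)) t := by
      have h1 : HasFDerivAt f (InnerProductSpace.toDual ℝ H (gradient f (x t))) (x t) :=
        hasGradientAt_iff_hasFDerivAt.1 (hfd (x t)).hasGradientAt
      have := h1.comp_hasDerivAt t (hx' t ht)
      simpa [InnerProductSpace.toDual_apply_apply, Function.comp_def] using this
    have hnorm : HasDerivAt (fun u => ‖v u‖^2)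
        (2 * @inner ℝ _ _ (v t) (-(s • x' t) - gradient f (x t))) t := hvd'.norm_sq
    have hsum := (hfxd.sub_const (f xstar)).add (hnorm.const_mul (1/2))
    have heq : dE t = (@inner ℝ _ _ (gradient f (x t)) (x' t))
        + 1/2 * (2 * @inner ℝ _ _ (v t) (-(s • x' t) - gradient f (x t))) := by
      rw [hdEdef]
      simp only []
      rw [real_inner_comm (v t)]
      ring
    rw [hEdef, heq]
    exact hsum
  -- key differential inequality
  have hkey : ∀ t ≥ t₀, dE t + (s/2) * E t ≤ -(3*s/16) * ‖x' t‖^2 := by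
    intro t ht
    have hF0 : 0 ≤ f (x t) - f xstar := sub_nonneg.2 (hmin (x t))
    have h := din_energy_decay s β hs hβ0 hsβ (x t - xstar) (x' t) (gradient f (x t))
      (f (x t) - f xstar) hF0 (hsc1 (x t)) (hsc2 (x t))
    rw [hdEdef, hEdef, hvdef]
    simp only []
    linarith
  -- primitive of the dissipation
  have hx'cont : ∀ u ≥ t₀, ContinuousAt x' u := fun u hu => (hx'' u hu).continuousAt
  obtain ⟨c, hcdef⟩ : ∃ c : ℝ → ℝ, c = fun u => (3*s/16) * (Real.exp (s/2*u) * ‖x' (max u t₀)‖^2) := ⟨_, rfl⟩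
  have hmaxc : Continuous fun u : ℝ => x' (max u t₀) := by
    apply ContinuousOn.comp_continuous (s := Ici t₀)
      (fun u hu => (hx'cont u hu).continuousWithinAt)
      (continuous_id.max continuous_const)
      (fun u => mem_Ici.2 (le_max_right _ _))
  have hccont : Continuous c := by
    rw [hcdef]
    exact continuous_const.mul ((Real.continuous_exp.comp
      (continuous_const.mul continuous_id)).mul ((hmaxc.norm).pow 2))
  have hceq : ∀ u ≥ t₀, c u = (3*s/16) * (Real.exp (s/2*u) * ‖x' u‖^2) := by
    intro u hu
    simp only [hcdef, max_eq_left hu]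
  have hcnn : ∀ u, 0 ≤ c u := by intro u; simp only [hcdef]; positivity
  obtain ⟨Y, hYdef⟩ : ∃ Y : ℝ → ℝ, Y = fun r => Real.exp (s/2*r) * E r + ∫ u in t₀..r, c u := ⟨_, rfl⟩
  have hYd : ∀ t ≥ t₀, HasDerivAt Y
      (Real.exp (s/2*t) * ((s/2) * E t + dE t) + c t) t := by
    intro t ht
    have h1 : HasDerivAt (fun r : ℝ => Real.exp (s/2*r)) (Real.exp (s/2*t) * (s/2)) t := by
      simpa using (((hasDerivAt_id t).const_mul (s/2)).exp)
    have h2 := h1.mul (hEd t ht)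
    have h3 : HasDerivAt (fun r => ∫ u in t₀..r, c u) (c t) t :=
      (hccont.integral_hasStrictDerivAt t₀ t).hasDerivAt
    have h4 := h2.add h3
    rw [hYdef]
    exact h4.congr_deriv (by ring)
  have hYcont : ContinuousOn Y (Ici t₀) :=
    fun t ht => ((hYd t ht).continuousAt).continuousWithinAt
  have hYanti : AntitoneOn Y (Ici t₀) := by
    apply antitoneOn_of_deriv_nonpos (convex_Ici t₀) hYcont
    · intro t ht
      rw [interior_Ici] at ht
      exact ((hYd t (le_of_lt ht)).differentiableAt).differentiableWithinAt
    · intro t ht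
      rw [interior_Ici] at ht
      have ht' := le_of_lt (mem_Ioi.1 ht)
      rw [(hYd t ht').deriv, hceq t ht']
      have hk := hkey t ht'
      have hepos : (0:ℝ) < Real.exp (s/2*t) := Real.exp_pos _
      have hmm := mul_le_mul_of_nonneg_left hk hepos.le
      nlinarith [hmm]
  obtain ⟨B, hBdef⟩ : ∃ B : ℝ, B = Real.exp (s/2*t₀) * E t₀ := ⟨_, rfl⟩
  have hBnn : 0 ≤ B := hBdef ▸ mul_nonneg (Real.exp_pos _).le (hEnn t₀)
  have hYt₀ : Y t₀ = B := by
    simp [hYdef, hBdef, intervalIntegral.integral_same]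
  have hYle : ∀ t ≥ t₀, Y t ≤ B := by
    intro t ht
    have := hYanti self_mem_Ici (mem_Ici.2 ht) ht
    rwa [hYt₀] at this
  have hsplit : ∀ t, Real.exp (s/2*t) * E t + (∫ u in t₀..t, c u) = Y t := by
    intro t; simp only [hYdef]
  have hInn : ∀ t ≥ t₀, 0 ≤ ∫ u in t₀..t, c u :=
    fun t ht => intervalIntegral.integral_nonneg ht (fun u _ => hcnn u)
  have hEexp : ∀ t ≥ t₀, Real.exp (s/2*t) * E t ≤ B := by
    intro t ht
    have h1 := hYle t ht
    have h2 := hInn t ht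
    have h3 := hsplit t
    linarith
  have hIle : ∀ t ≥ t₀, (∫ u in t₀..t, c u) ≤ B := by
    intro t ht
    have h1 := hYle t ht
    have h2 : 0 ≤ Real.exp (s/2*t) * E t := mul_nonneg (Real.exp_pos _).le (hEnn t)
    have h3 := hsplit t
    linarith
  constructor
  · -- exponential decay of averaged gradients
    have hEdecay : ∀ t ≥ t₀, E t ≤ B * Real.exp (-(s/2*t)) := by
      intro t ht
      have h1 := hEexp t ht
      have h2 : (0:ℝ) < Real.exp (s/2*t) := Real.exp_pos _
      have h3 : Real.exp (s/2*t) * Real.exp (-(s/2*t)) = 1 := by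
        rw [← Real.exp_add]; simp
      nlinarith [mul_le_mul_of_nonneg_right h1 (Real.exp_pos (-(s/2*t))).le]
    have hxdecay : ∀ t ≥ t₀, ‖x t - xstar‖^2 ≤ (2/s^2) * B * Real.exp (-(s/2*t)) := by
      intro t ht
      have h1 := hsc2 (x t)
      have h2 : f (x t) - f xstar ≤ E t := by
        simp only [hEdef]
        have : (0:ℝ) ≤ (1/2) * ‖v t‖^2 := by positivity
        linarith
      have h3 := hEdecay t ht
      have hs2 : (0:ℝ) < s^2 := by positivity
      rw [div_mul_eq_mul_div, div_mul_eq_mul_div, le_div_iff₀ hs2]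
      nlinarith
    -- local Lipschitz bound for the gradient near the minimizer
    obtain ⟨K, w, hw, hK⟩ := (hgrad1.contDiffAt (x := xstar)).exists_lipschitzOnWith
    obtain ⟨ε, hε, hball⟩ := Metric.mem_nhds_iff.1 hw
    have htend : Filter.Tendsto (fun t : ℝ => (2/s^2) * B * Real.exp (-(s/2*t)))
        Filter.atTop (nhds 0) := by
      have h1 : Filter.Tendsto (fun t : ℝ => s/2*t) Filter.atTop Filter.atTop := by
        apply Filter.Tendsto.const_mul_atTop (by positivity) Filter.tendsto_id
      have h2 : Filter.Tendsto (fun t : ℝ => -(s/2*t)) Filter.atTop Filter.atBot :=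
        Filter.tendsto_neg_atBot_iff.2 h1
      have h3 := Real.tendsto_exp_atBot.comp h2
      have h4 := h3.const_mul ((2/s^2) * B)
      simpa using h4
    have hev : ∀ᶠ t in Filter.atTop, (2/s^2)*B*Real.exp (-(s/2*t)) < ε^2 :=
      htend.eventually (gt_mem_nhds (by positivity))
    obtain ⟨T₀, hT₀⟩ := Filter.eventually_atTop.1 hev
    have hTt₀ : t₀ ≤ max T₀ t₀ := le_max_right _ _
    set T := max T₀ t₀ with hTdef
    have htail : ∀ t ≥ T, ‖gradient f (x t)‖^2 ≤ (K:ℝ)^2 * ((2/s^2)*B) * Real.exp (-(s/2*t)) := by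
      intro t ht
      have ht₀' : t₀ ≤ t := hTt₀.trans ht
      have h1 : ‖x t - xstar‖^2 < ε^2 :=
        lt_of_le_of_lt (hxdecay t ht₀') (hT₀ t ((le_max_left _ _).trans ht))
      have h2 : ‖x t - xstar‖ < ε := lt_of_pow_lt_pow_left₀ 2 hε.le h1
      have hmem : x t ∈ w := hball (by rwa [Metric.mem_ball, dist_eq_norm])
      have hmem0 : xstar ∈ w := hball (Metric.mem_ball_self hε)
      have h3 := hK.dist_le_mul (x t) hmem xstar hmem0
      rw [hgstar, dist_zero_right, dist_eq_norm] at h3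
      have h4 : ‖gradient f (x t)‖^2 ≤ ((K:ℝ) * ‖x t - xstar‖)^2 :=
        pow_le_pow_left₀ (norm_nonneg _) h3 2
      have h5 := hxdecay t ht₀'
      have hK0 : (0:ℝ) ≤ (K:ℝ) := K.coe_nonneg
      calc ‖gradient f (x t)‖^2 ≤ (K:ℝ)^2 * ‖x t - xstar‖^2 := by rw [mul_pow] at h4; exact h4
        _ ≤ (K:ℝ)^2 * ((2/s^2) * B * Real.exp (-(s/2*t))) := by
            apply mul_le_mul_of_nonneg_left h5 (by positivity)
        _ = (K:ℝ)^2 * ((2/s^2)*B) * Real.exp (-(s/2*t)) := by ring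
    -- bound on the compact piece
    have hxcont : ContinuousOn x (Icc t₀ T) := by
      intro u hu
      exact ((hx' u hu.1).continuousAt).continuousWithinAt
    have hGcont : ContinuousOn (fun t => ‖gradient f (x t)‖^2) (Icc t₀ T) :=
      ((hgrad1.continuous.comp_continuousOn hxcont).norm).pow 2
    obtain ⟨M, hM⟩ := (isCompact_Icc).exists_bound_of_continuousOn hGcont
    have hM0 : (0:ℝ) ≤ M := le_trans (norm_nonneg _) (hM t₀ ⟨le_rfl, hTt₀⟩)
    set K₂ : ℝ := max ((K:ℝ)^2 * ((2/s^2)*B)) (M * Real.exp (s/2*T)) with hK₂def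
    have hK₂0 : (0:ℝ) ≤ K₂ := le_trans (by positivity) (le_max_right _ _)
    have hGdecay : ∀ t ≥ t₀, ‖gradient f (x t)‖^2 ≤ K₂ * Real.exp (-(s/2*t)) := by
      intro t ht
      rcases le_or_gt t T with h | h
      · have hMt := hM t ⟨ht, h⟩
        rw [Real.norm_eq_abs, abs_of_nonneg (by positivity)] at hMt
        have he : (M * Real.exp (s/2*T)) * Real.exp (-(s/2*t)) ≤ K₂ * Real.exp (-(s/2*t)) :=
          mul_le_mul_of_nonneg_right (le_max_right _ _) (Real.exp_pos _).le
        have he2 : M ≤ (M * Real.exp (s/2*T)) * Real.exp (-(s/2*t)) := by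
          rw [mul_assoc, ← Real.exp_add]
          have h9 : (1:ℝ) ≤ Real.exp (s/2*T + -(s/2*t)) := by
            rw [Real.one_le_exp_iff]
            nlinarith
          nlinarith
        linarith
      · exact le_trans (htail t h.le)
          (mul_le_mul_of_nonneg_right (le_max_left _ _) (Real.exp_pos _).le)
    -- conclude
    refine ⟨(K₂+1) * (2/s), by positivity, ?_⟩
    intro t ht
    have hxcont2 : ContinuousOn x (Icc t₀ t) := by
      intro u hu
      exact ((hx' u hu.1).continuousAt).continuousWithinAt
    have hint1 : IntervalIntegrable (fun u => Real.exp (s*u) * ‖gradient f (x u)‖^2)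
        MeasureTheory.volume t₀ t := by
      apply ContinuousOn.intervalIntegrable
      rw [uIcc_of_le ht]
      exact (Real.continuous_exp.comp (continuous_const.mul continuous_id)).continuousOn.mul
        (((hgrad1.continuous.comp_continuousOn hxcont2).norm).pow 2)
    have hint2 : IntervalIntegrable (fun u => (K₂+1) * Real.exp (s/2*u))
        MeasureTheory.volume t₀ t :=
      (continuous_const.mul (Real.continuous_exp.comp
        (continuous_const.mul continuous_id))).intervalIntegrable _ _
    have hmono : (∫ u in t₀..t, Real.exp (s*u) * ‖gradient f (x u)‖^2)
        ≤ ∫ u in t₀..t, (K₂+1) * Real.exp (s/2*u) := by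
      apply intervalIntegral.integral_mono_on ht hint1 hint2
      intro u hu
      have h1 := hGdecay u hu.1
      have h2 : Real.exp (s*u) * ‖gradient f (x u)‖^2
          ≤ Real.exp (s*u) * (K₂ * Real.exp (-(s/2*u))) :=
        mul_le_mul_of_nonneg_left h1 (Real.exp_pos _).le
      have h3 : Real.exp (s*u) * (K₂ * Real.exp (-(s/2*u))) = K₂ * Real.exp (s/2*u) := by
        rw [mul_comm K₂, ← mul_assoc, ← Real.exp_add]
        ring_nf
      have h4 : K₂ * Real.exp (s/2*u) ≤ (K₂+1) * Real.exp (s/2*u) :=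
        mul_le_mul_of_nonneg_right (by linarith) (Real.exp_pos _).le
      linarith
    have hval : (∫ u in t₀..t, (K₂+1) * Real.exp (s/2*u))
        = (K₂+1)*(2/s) * (Real.exp (s/2*t) - Real.exp (s/2*t₀)) := by
      have hder : ∀ u ∈ uIcc t₀ t, HasDerivAt (fun r => (K₂+1)*(2/s) * Real.exp (s/2*r))
          ((K₂+1) * Real.exp (s/2*u)) u := by
        intro u _
        have h1 : HasDerivAt (fun r : ℝ => Real.exp (s/2*r)) (Real.exp (s/2*u) * (s/2)) u := by
          simpa using (((hasDerivAt_id u).const_mul (s/2)).exp)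
        have h2 := h1.const_mul ((K₂+1)*(2/s))
        have e : (2/s)*(s/2) = 1 := by rw [div_mul_div_comm, mul_comm 2 s, div_self (by positivity)]
        exact h2.congr_deriv (by linear_combination ((K₂ + 1) * Real.exp (s / 2 * u)) * e)
      rw [intervalIntegral.integral_eq_sub_of_hasDerivAt hder hint2]
      ring
    have hfinal : (∫ u in t₀..t, Real.exp (s*u) * ‖gradient f (x u)‖^2)
        ≤ (K₂+1)*(2/s) * Real.exp (s/2*t) := by
      rw [hval] at hmono
      have h5 : (0:ℝ) ≤ (K₂+1)*(2/s) := by positivity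
      nlinarith [Real.exp_pos (s/2*t₀)]
    have hmul := mul_le_mul_of_nonneg_left hfinal (Real.exp_pos (-s*t)).le
    have hexp : Real.exp (-s*t) * ((K₂+1)*(2/s) * Real.exp (s/2*t))
        = (K₂+1)*(2/s) * Real.exp (-(s/2)*t) := by
      rw [mul_comm ((K₂+1)*(2/s)), ← mul_assoc, ← Real.exp_add]
      ring_nf
    rw [hexp] at hmul
    exact hmul

  · -- integrability of the speed
    have hintc : MeasureTheory.IntegrableOn c (Ioi t₀) := by
      apply MeasureTheory.integrableOn_Ioi_of_intervalIntegral_norm_bounded B t₀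
        (fun i => hccont.integrableOn_Ioc) Filter.tendsto_id
      filter_upwards [Filter.eventually_ge_atTop t₀] with i hi
      have he : (∫ u in t₀..(i:ℝ), ‖c u‖) = ∫ u in t₀..i, c u := by
        apply intervalIntegral.integral_congr
        intro u _
        exact Real.norm_of_nonneg (hcnn u)
      rw [id_eq, he]
      exact hIle i hi
    have h1 : MeasureTheory.IntegrableOn c (Ici t₀) := by
      rw [integrableOn_Ici_iff_integrableOn_Ioi]
      exact hintc
    have h2 : MeasureTheory.IntegrableOn (fun u => (16/(3*s)) * c u) (Ici t₀) :=
      h1.const_mul _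
    apply MeasureTheory.IntegrableOn.congr_fun h2 ?_ measurableSet_Ici
    intro u hu
    simp only [hcdef, max_eq_left (mem_Ici.1 hu)]
    have hs' : s ≠ 0 := ne_of_gt hs
    field_simp
end

section
/- Let f : H → ℝ be a differentiable μ-strongly convex function (μ > 0) with unique minimizer x*, let s > 0 and β satisfy 0 ≤ β ≤ 1/(2√μ) and √s ≤ β, and let (x_k)_{k≥0} be a sequence in H satisfying for every k ≥ 1 the implicit recursion (1/√s)(x_{k+1} − 2x_k + x_{k−1}) + 2√μ·(x_{k+1} − x_k) + β·(∇f(x_{k+1}) − ∇f(x_k)) + √s·∇f(x_{k+1}) = 0 (the (IPAHD-SC) algorithm). Set q := 1/(1 + (1/2)√(μs)) and E₁ := f(x₁) − f(x*) + (1/2)‖√μ(x₁ − x*) + (1/√s)(x₁ − x₀) + β∇f(x₁)‖². Then for every k ≥ 1, (μ/2)‖x_k − x*‖² ≤ f(x_k) − min_H f ≤ E₁·q^{k−1}. Moreover, with θ := 1/(1 + √(μs)), there exists a constant C > 0 such that θ^k · Σ_{j=0}^{k−2} θ^{−j} ‖∇f(x_j)‖² ≤ C·q^k for all k ≥ 2.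 -/
open Real Set Finset
open scoped RealInnerProductSpace

lemma grad_strong_convex_ineq
    {H : Type*} [NormedAddCommGroup H] [InnerProductSpace ℝ H] [CompleteSpace H]
    (f : H → ℝ) (hdiff : Differentiable ℝ f)
    (μ : ℝ)
    (hsc : ConvexOn ℝ Set.univ (fun z => f z - μ / 2 * ‖z‖ ^ 2))
    (p w : H) :
    f p + ⟪gradient f p, w - p⟫ + μ / 2 * ‖w - p‖ ^ 2 ≤ f w := by
  set v := w - p with hv
  set g : H → ℝ := fun z => f z - μ / 2 * ‖z‖ ^ 2 with hg
  have hline : HasDerivAt (fun t : ℝ => p + t • v) v 0 := by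
    simpa using ((hasDerivAt_id (0:ℝ)).smul_const v).const_add p
  have h0 : p + (0:ℝ) • v = p := by simp
  have hf0 : HasFDerivAt f (fderiv ℝ f p) (p + (0:ℝ) • v) := by
    rw [h0]; exact (hdiff p).hasFDerivAt
  have hf1 : HasDerivAt (fun t : ℝ => f (p + t • v)) (fderiv ℝ f p v) 0 :=
    hf0.comp_hasDerivAt 0 hline
  have hfd : fderiv ℝ f p v = ⟪gradient f p, v⟫ := by
    have h1 : HasFDerivAt f (InnerProductSpace.toDual ℝ H (gradient f p)) p :=
      (hdiff p).hasGradientAt.hasFDerivAt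
    rw [h1.fderiv]
    exact InnerProductSpace.toDual_apply_apply
  have hψ : (fun t : ℝ => ‖p + t • v‖ ^ 2)
      = fun t : ℝ => ‖p‖ ^ 2 + 2 * t * ⟪p, v⟫ + t ^ 2 * ‖v‖ ^ 2 := by
    funext t
    rw [norm_add_sq_real, norm_smul, real_inner_smul_right, Real.norm_eq_abs, mul_pow, sq_abs]
    ring
  have hψ' : HasDerivAt (fun t : ℝ => ‖p + t • v‖ ^ 2) (2 * ⟪p, v⟫) 0 := by
    rw [hψ]
    have h := (((hasDerivAt_id (0:ℝ)).const_mul 2).mul_const ⟪p, v⟫).const_add (‖p‖ ^ 2)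
    have h2 := h.add (((hasDerivAt_pow 2 (0:ℝ))).mul_const (‖v‖ ^ 2))
    simp at h2; exact h2
  have hφ : HasDerivAt (fun t : ℝ => g (p + t • v))
      (⟪gradient f p, v⟫ - μ / 2 * (2 * ⟪p, v⟫)) 0 := by
    have := hf1.sub (hψ'.const_mul (μ / 2))
    rw [hfd] at this
    simp [hg, mul_comm] at this ⊢; exact this
  have hconv : ConvexOn ℝ Set.univ (fun t : ℝ => g (p + t • v)) := by
    have h2 := hsc.comp_affineMap (AffineMap.lineMap p w : ℝ →ᵃ[ℝ] H)
    have he : (fun t : ℝ => g (p + t • v)) = (g ∘ (AffineMap.lineMap p w : ℝ →ᵃ[ℝ] H)) := by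
      funext t; simp [hg, hv, AffineMap.lineMap_apply, add_comm]
    rw [he]
    simpa using h2
  have hslope := hconv.le_slope_of_hasDerivAt (Set.mem_univ 0) (Set.mem_univ 1) one_pos hφ
  rw [slope_def_field] at hslope
  simp only [one_smul, zero_smul, sub_zero, div_one, add_zero] at hslope
  have e1 : p + v = w := by rw [hv]; abel
  have e2 : ‖w‖ ^ 2 = ‖p‖ ^ 2 + 2 * ⟪p, v⟫ + ‖v‖ ^ 2 := by
    rw [← e1, norm_add_sq_real]
  rw [e1] at hslope
  simp only [hg] at hslope
  have e3 : μ / 2 * ‖w‖ ^ 2 = μ / 2 * ‖p‖ ^ 2 + μ * ⟪p, v⟫ + μ / 2 * ‖v‖ ^ 2 := by rw [e2]; ring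
  linarith [hslope, e3]


lemma cs_aux (a x y i : ℝ) (ha : 0 ≤ a) (h : -(x * y) ≤ i) :
    0 ≤ a * i + (a ^ 2 * x ^ 2 + y ^ 2) / 2 := by
  nlinarith [sq_nonneg (a * x - y), mul_le_mul_of_nonneg_left h ha]

set_option maxHeartbeats 800000 in
lemma key_scalar (a r β F F₀ iud iug idg nu nd ng V₁ V₂ : ℝ)
    (ha : 0 < a) (hr : 0 < r) (hrβ : r ≤ β) (hb : a * β ≤ 1/2)
    (hF : 0 ≤ F)
    (hiud : -(nu * nd) ≤ iud) (hidg : -(nd * ng) ≤ idg)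
    (H1 : F - F₀ + a ^ 2 * r ^ 2 / 2 * nd ^ 2 ≤ r * idg)
    (H2 : F + a ^ 2 / 2 * nu ^ 2 ≤ iug)
    (H3 : a ^ 2 / 2 * (nu ^ 2 - 2 * r * iud + r ^ 2 * nd ^ 2) ≤ F₀)
    (hV₂ : V₂ = a ^ 2 * nu ^ 2 + nd ^ 2 + β ^ 2 * ng ^ 2 + 2 * a * iud
        + 2 * a * β * iug + 2 * β * idg)
    (hV₁ : V₁ = V₂ + 2 * (a ^ 2 * r * iud + a * r * iug + a * r * nd ^ 2 + r * idg
        + a * β * r * idg + β * r * ng ^ 2)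
        + (a ^ 2 * r ^ 2 * nd ^ 2 + 2 * a * r ^ 2 * idg + r ^ 2 * ng ^ 2)) :
    (1 + a * r / 2) * (F + V₂ / 2) + r ^ 2 / 2 * ng ^ 2 ≤ F₀ + V₁ / 2 := by
  have hβpos : 0 < β := lt_of_lt_of_le hr hrβ
  have har : a * r ≤ 1 / 2 := le_trans (by nlinarith) hb
  have hiug0 : 0 ≤ iug := by nlinarith [sq_nonneg nu]
  have G1 : 0 ≤ (3 * a * r / 4) * (iug - F - a ^ 2 / 2 * nu ^ 2) :=
    mul_nonneg (by positivity) (by linarith)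
  have G2 : 0 ≤ (1 - a * r / 4) * (r * idg - F + F₀ - a ^ 2 * r ^ 2 / 2 * nd ^ 2) :=
    mul_nonneg (by linarith) (by linarith)
  have G3 : 0 ≤ (a * r / 4) * (F₀ - a ^ 2 / 2 * (nu ^ 2 - 2 * r * iud + r ^ 2 * nd ^ 2)) :=
    mul_nonneg (by positivity) (by linarith)
  have G4 : 0 ≤ (a * r / 4) * (1 - 2 * a * β) * iug :=
    mul_nonneg (mul_nonneg (by positivity) (by linarith)) hiug0
  have CS1 : 0 ≤ a * iud + (a ^ 2 * nu ^ 2 + nd ^ 2) / 2 := cs_aux a nu nd iud ha.le hiud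
  have G5 : 0 ≤ ((a * r / 2) * (1 - a * r / 2)) * (a * iud + (a ^ 2 * nu ^ 2 + nd ^ 2) / 2) :=
    mul_nonneg (mul_nonneg (by positivity) (by linarith)) CS1
  have CS2 : 0 ≤ a * idg + (ng ^ 2 + a ^ 2 * nd ^ 2) / 2 := by
    have := cs_aux a nd ng idg ha.le hidg; linarith
  have G6 : 0 ≤ (β * r / 2 + 5 * r ^ 2 / 4) * (a * idg + (ng ^ 2 + a ^ 2 * nd ^ 2) / 2) :=
    mul_nonneg (by positivity) CS2
  have L1 : 0 ≤ a ^ 4 * r ^ 2 / 8 * nu ^ 2 := by positivity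
  have L2 : 0 ≤ (a * r / 2 + a ^ 2 * r ^ 2 / 2 - a ^ 2 * β * r / 4) * nd ^ 2 :=
    mul_nonneg (by nlinarith [mul_le_mul_of_nonneg_right hb (mul_nonneg ha.le hr.le)]) (sq_nonneg nd)
  have L3 : 0 ≤ (3 * β * r / 4 - a * β ^ 2 * r / 4 - 5 * r ^ 2 / 8) * ng ^ 2 :=
    mul_nonneg (by nlinarith [mul_le_mul_of_nonneg_right hb (mul_nonneg hβpos.le hr.le), mul_le_mul_of_nonneg_right hrβ hr.le]) (sq_nonneg ng)
  have key : F₀ + V₁ / 2 - ((1 + a * r / 2) * (F + V₂ / 2) + r ^ 2 / 2 * ng ^ 2)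
      = (3 * a * r / 4) * (iug - F - a ^ 2 / 2 * nu ^ 2)
      + (1 - a * r / 4) * (r * idg - F + F₀ - a ^ 2 * r ^ 2 / 2 * nd ^ 2)
      + (a * r / 4) * (F₀ - a ^ 2 / 2 * (nu ^ 2 - 2 * r * iud + r ^ 2 * nd ^ 2))
      + (a * r / 4) * (1 - 2 * a * β) * iug
      + ((a * r / 2) * (1 - a * r / 2)) * (a * iud + (a ^ 2 * nu ^ 2 + nd ^ 2) / 2)
      + (β * r / 2 + 5 * r ^ 2 / 4) * (a * idg + (ng ^ 2 + a ^ 2 * nd ^ 2) / 2)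
      + a ^ 4 * r ^ 2 / 8 * nu ^ 2
      + (a * r / 2 + a ^ 2 * r ^ 2 / 2 - a ^ 2 * β * r / 4) * nd ^ 2
      + (3 * β * r / 4 - a * β ^ 2 * r / 4 - 5 * r ^ 2 / 8) * ng ^ 2 := by
    subst hV₂ hV₁; ring
  linarith [G1, G2, G3, G4, G5, G6, L1, L2, L3, key]

set_option maxHeartbeats 1000000 in
/-- Theorem 5.1: linear convergence of the values and exponential decay of the
gradients for the proximal algorithm (IPAHD-SC). -/
theorem ipahd_sc_linear_convergence
    {H : Type*} [NormedAddCommGroup H] [InnerProductSpace ℝ H] [CompleteSpace H]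
    (f : H → ℝ) (hdiff : Differentiable ℝ f)
    (μ : ℝ) (hμ : 0 < μ)
    (hsc : ConvexOn ℝ Set.univ (fun z => f z - μ / 2 * ‖z‖ ^ 2))
    (xstar : H) (hmin : ∀ y, f xstar ≤ f y)
    (s β : ℝ) (hs : 0 < s)
    (hβ0 : 0 ≤ β) (hβ : β ≤ 1 / (2 * Real.sqrt μ)) (hsβ : Real.sqrt s ≤ β)
    (x : ℕ → H)
    (hrec : ∀ k : ℕ, 1 ≤ k →
      (1 / Real.sqrt s) • (x (k + 1) - (2 : ℝ) • x k + x (k - 1))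
        + (2 * Real.sqrt μ) • (x (k + 1) - x k)
        + β • (gradient f (x (k + 1)) - gradient f (x k))
        + Real.sqrt s • gradient f (x (k + 1)) = 0)
    (q θ E₁ : ℝ)
    (hq : q = 1 / (1 + (1 / 2) * Real.sqrt (μ * s)))
    (hθ : θ = 1 / (1 + Real.sqrt (μ * s)))
    (hE₁ : E₁ = f (x 1) - f xstar
      + (1 / 2) * ‖Real.sqrt μ • (x 1 - xstar) + (1 / Real.sqrt s) • (x 1 - x 0)
          + β • gradient f (x 1)‖ ^ 2) :
    (∀ k : ℕ, 1 ≤ k →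
      μ / 2 * ‖x k - xstar‖ ^ 2 ≤ f (x k) - f xstar ∧
      f (x k) - f xstar ≤ E₁ * q ^ (k - 1)) ∧
    ∃ C > 0, ∀ k : ℕ, 2 ≤ k →
      θ ^ k * ∑ j ∈ Finset.range (k - 1), (1 / θ) ^ j * ‖gradient f (x j)‖ ^ 2
        ≤ C * q ^ k := by
  set a := Real.sqrt μ with ha_def
  set r := Real.sqrt s with hr_def
  have ha : 0 < a := Real.sqrt_pos.2 hμ
  have hr : 0 < r := Real.sqrt_pos.2 hs
  have ha2 : a ^ 2 = μ := Real.sq_sqrt hμ.le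
  have hβpos : 0 < β := lt_of_lt_of_le hr hsβ
  have hβ' : a * β ≤ 1 / 2 := by
    have h1 : a * β ≤ a * (1 / (2 * a)) := mul_le_mul_of_nonneg_left hβ ha.le
    have h2 : a * (1 / (2 * a)) = 1 / 2 := by field_simp
    linarith
  have hgrad : ∀ p w : H, f p + ⟪gradient f p, w - p⟫ + μ / 2 * ‖w - p‖ ^ 2 ≤ f w :=
    grad_strong_convex_ineq f hdiff μ hsc
  have hgradstar : gradient f xstar = 0 := by
    have hloc : IsLocalMin f xstar := Filter.Eventually.of_forall hmin
    have hfd : fderiv ℝ f xstar = 0 := hloc.fderiv_eq_zero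
    have h1 := (hdiff xstar).hasGradientAt.hasFDerivAt
    have h3 : InnerProductSpace.toDual ℝ H (gradient f xstar) = 0 := by
      rw [← h1.fderiv, hfd]
    simpa using (LinearIsometryEquiv.map_eq_zero_iff _).mp h3
  set v : ℕ → H := fun j => a • (x j - xstar) + (1 / r) • (x j - x (j - 1))
      + β • gradient f (x j) with hv_def
  set E : ℕ → ℝ := fun j => f (x j) - f xstar + ‖v j‖ ^ 2 / 2 with hE_def
  have hEnonneg : ∀ j, 0 ≤ E j := by
    intro j
    have h1 : 0 ≤ f (x j) - f xstar := sub_nonneg.2 (hmin _)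
    have h2 : 0 ≤ ‖v j‖ ^ 2 / 2 := by positivity
    simp only [hE_def]
    linarith
  have hE1eq : E 1 = E₁ := by
    simp only [hE_def, hv_def, hE₁]
    norm_num
    ring
  have hkey : ∀ k : ℕ, 1 ≤ k →
      (1 + a * r / 2) * E (k + 1) + r ^ 2 / 2 * ‖gradient f (x (k + 1))‖ ^ 2 ≤ E k := by
    intro k hk
    set u := x (k + 1) - xstar with hu_def
    set d := (1 / r) • (x (k + 1) - x k) with hd_def
    set g1 := gradient f (x (k + 1)) with hg1_def
    have hvk1 : v (k + 1) = a • u + d + β • g1 := by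
      simp only [hv_def, Nat.add_sub_cancel]; rfl
    have hrd : r • d = x (k + 1) - x k := by
      rw [hd_def, smul_smul, mul_one_div, div_self hr.ne', one_smul]
    have hw : v k = v (k + 1) + (a * r) • d + r • g1 := by
      have hra : (a * r) • d = a • (x (k + 1) - x k) := by
        rw [hd_def, smul_smul, mul_one_div, mul_div_assoc, div_self hr.ne', mul_one]
      have h1 : v (k + 1) + (a * r) • d + r • g1 - v k =
          (1 / r) • (x (k + 1) - (2 : ℝ) • x k + x (k - 1))
            + (2 * a) • (x (k + 1) - x k)
            + β • (gradient f (x (k + 1)) - gradient f (x k))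
            + r • gradient f (x (k + 1)) := by
        rw [hvk1, hra]
        simp only [hv_def, hd_def, hu_def, hg1_def, Nat.add_sub_cancel]
        module
      have h2 : v (k + 1) + (a * r) • d + r • g1 - v k = 0 := by
        rw [h1]; exact hrec k hk
      have h3 := sub_eq_zero.mp h2
      rw [← h3]
    have hV2 : ‖v (k + 1)‖ ^ 2 = a ^ 2 * ‖u‖ ^ 2 + ‖d‖ ^ 2 + β ^ 2 * ‖g1‖ ^ 2
        + 2 * a * ⟪u, d⟫ + 2 * a * β * ⟪g1, u⟫ + 2 * β * ⟪g1, d⟫ := by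
      rw [hvk1]
      conv_lhs => rw [← real_inner_self_eq_norm_sq]
      simp only [inner_add_left, inner_add_right, real_inner_smul_left, real_inner_smul_right]
      simp only [real_inner_self_eq_norm_sq, real_inner_comm d u, real_inner_comm u g1,
        real_inner_comm d g1]
      ring
    have hV1 : ‖v k‖ ^ 2 = ‖v (k + 1)‖ ^ 2
        + 2 * (a ^ 2 * r * ⟪u, d⟫ + a * r * ⟪g1, u⟫ + a * r * ‖d‖ ^ 2 + r * ⟪g1, d⟫
          + a * β * r * ⟪g1, d⟫ + β * r * ‖g1‖ ^ 2)
        + (a ^ 2 * r ^ 2 * ‖d‖ ^ 2 + 2 * a * r ^ 2 * ⟪g1, d⟫ + r ^ 2 * ‖g1‖ ^ 2) := by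
      rw [hV2, hw, hvk1]
      conv_lhs => rw [← real_inner_self_eq_norm_sq]
      simp only [inner_add_left, inner_add_right, real_inner_smul_left, real_inner_smul_right]
      simp only [real_inner_self_eq_norm_sq, real_inner_comm d u, real_inner_comm u g1,
        real_inner_comm d g1]
      ring
    have HF : 0 ≤ f (x (k + 1)) - f xstar := sub_nonneg.2 (hmin _)
    have H2 : f (x (k + 1)) - f xstar + a ^ 2 / 2 * ‖u‖ ^ 2 ≤ ⟪g1, u⟫ := by
      have h1 := hgrad (x (k + 1)) xstar
      have h2 : xstar - x (k + 1) = -u := by rw [hu_def]; abel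
      rw [h2, inner_neg_right, norm_neg, ← hg1_def, ← ha2] at h1
      linarith
    have H1 : (f (x (k + 1)) - f xstar) - (f (x k) - f xstar)
        + a ^ 2 * r ^ 2 / 2 * ‖d‖ ^ 2 ≤ r * ⟪g1, d⟫ := by
      have h1 := hgrad (x (k + 1)) (x k)
      have h2 : x k - x (k + 1) = -(r • d) := by rw [hrd]; abel
      have h3 : ‖(-(r • d))‖ ^ 2 = r ^ 2 * ‖d‖ ^ 2 := by
        rw [norm_neg, norm_smul, Real.norm_eq_abs, abs_of_pos hr, mul_pow]
      rw [h2, inner_neg_right, real_inner_smul_right, h3, ← hg1_def, ← ha2] at h1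
      nlinarith [h1]
    have H3 : a ^ 2 / 2 * (‖u‖ ^ 2 - 2 * r * ⟪u, d⟫ + r ^ 2 * ‖d‖ ^ 2)
        ≤ f (x k) - f xstar := by
      have h1 := hgrad xstar (x k)
      rw [hgradstar, inner_zero_left, ← ha2] at h1
      have h2 : x k - xstar = u - r • d := by rw [hu_def, hrd]; abel
      have h3 : ‖x k - xstar‖ ^ 2 = ‖u‖ ^ 2 - 2 * r * ⟪u, d⟫ + r ^ 2 * ‖d‖ ^ 2 := by
        rw [h2, ← real_inner_self_eq_norm_sq]
        simp only [inner_sub_left, inner_sub_right, real_inner_smul_left, real_inner_smul_right,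
          real_inner_self_eq_norm_sq, real_inner_comm d u, norm_smul, Real.norm_eq_abs,
          abs_of_pos hr, mul_pow]
        ring
      rw [h3] at h1
      linarith
    have hiud : -(‖u‖ * ‖d‖) ≤ ⟪u, d⟫ := (abs_le.mp (abs_real_inner_le_norm u d)).1
    have hidg : -(‖d‖ * ‖g1‖) ≤ ⟪g1, d⟫ := by
      have := (abs_le.mp (abs_real_inner_le_norm g1 d)).1
      nlinarith [this]
    have main := key_scalar a r β (f (x (k + 1)) - f xstar) (f (x k) - f xstar)
      ⟪u, d⟫ ⟪g1, u⟫ ⟪g1, d⟫ ‖u‖ ‖d‖ ‖g1‖ (‖v k‖ ^ 2) (‖v (k + 1)‖ ^ 2)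
      ha hr hsβ hβ' HF hiud hidg H1 H2 H3 hV2 hV1
    simp only [hE_def]
    linarith [main]
  have hq' : q = 1 / (1 + a * r / 2) := by
    rw [hq, Real.sqrt_mul hμ.le, ← ha_def, ← hr_def]; ring_nf
  have hθ' : θ = 1 / (1 + a * r) := by
    rw [hθ, Real.sqrt_mul hμ.le, ← ha_def, ← hr_def]
  have hdenpos : (0:ℝ) < 1 + a * r / 2 := by positivity
  have hqpos : 0 < q := by rw [hq']; positivity
  have hθpos : 0 < θ := by rw [hθ']; positivity
  have hθltq : θ < q := by
    rw [hθ', hq']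
    apply one_div_lt_one_div_of_lt hdenpos
    nlinarith [mul_pos ha hr]
  have hdecay : ∀ k : ℕ, 1 ≤ k → E k ≤ E₁ * q ^ (k - 1) := by
    intro k hk
    induction k, hk using Nat.le_induction with
    | base => simp [hE1eq]
    | succ n hn ih =>
      have step := hkey n hn
      have hng : 0 ≤ r ^ 2 / 2 * ‖gradient f (x (n + 1))‖ ^ 2 := by positivity
      have h1 : (1 + a * r / 2) * E (n + 1) ≤ E n := by linarith
      have h2 : E (n + 1) ≤ q * E n := by
        rw [hq', one_div, inv_mul_eq_div, le_div_iff₀ hdenpos]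
        linarith [h1]
      have h3 : q * E n ≤ q * (E₁ * q ^ (n - 1)) := mul_le_mul_of_nonneg_left ih hqpos.le
      have h4 : q * (E₁ * q ^ (n - 1)) = E₁ * q ^ n := by
        have hpow : q ^ n = q ^ (n - 1) * q := by
          rw [← pow_succ]
          congr 1
          omega
        rw [hpow]
        ring
      have h5 : (n + 1) - 1 = n := by omega
      rw [h5]
      linarith
  constructor
  · intro k hk
    constructor
    · have h1 := hgrad xstar (x k)
      rw [hgradstar, inner_zero_left] at h1
      linarith
    · have h1 : f (x k) - f xstar ≤ E k := by
        have h2 : 0 ≤ ‖v k‖ ^ 2 / 2 := by positivity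
        simp only [hE_def]
        linarith
      exact le_trans h1 (hdecay k hk)
  · have hE₁nonneg : 0 ≤ E₁ := hE1eq ▸ hEnonneg 1
    set M := max (max (‖gradient f (x 0)‖ ^ 2 + 1) ((‖gradient f (x 1)‖ ^ 2 + 1) / q))
        ((2 * E₁ / r ^ 2 + 1) / q ^ 2) with hM_def
    have hM1 : ‖gradient f (x 0)‖ ^ 2 + 1 ≤ M :=
      le_trans (le_max_left _ _) (le_max_left _ _)
    have hM2 : (‖gradient f (x 1)‖ ^ 2 + 1) / q ≤ M :=
      le_trans (le_max_right _ _) (le_max_left _ _)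
    have hM3 : (2 * E₁ / r ^ 2 + 1) / q ^ 2 ≤ M := le_max_right _ _
    have hMpos : 0 < M := lt_of_lt_of_le (by positivity) hM1
    have hMbound : ∀ j : ℕ, ‖gradient f (x j)‖ ^ 2 ≤ M * q ^ j := by
      intro j
      match j with
      | 0 => simpa using by linarith [hM1] 
      | 1 =>
        have h1 : ((‖gradient f (x 1)‖ ^ 2 + 1) / q) * q = ‖gradient f (x 1)‖ ^ 2 + 1 := by
          field_simp
        have h2 : ((‖gradient f (x 1)‖ ^ 2 + 1) / q) * q ≤ M * q ^ 1 := by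
          rw [pow_one]
          exact mul_le_mul_of_nonneg_right hM2 hqpos.le
        rw [h1] at h2
        linarith
      | (j + 2) =>
        have hstep := hkey (j + 1) (by omega)
        have hE2 : 0 ≤ E (j + 1 + 1) := hEnonneg _
        have hcoef : 0 ≤ (1 + a * r / 2) * E (j + 1 + 1) :=
          mul_nonneg (by positivity) hE2
        have h3 : r ^ 2 / 2 * ‖gradient f (x (j + 2))‖ ^ 2 ≤ E (j + 1) := by
          have : j + 1 + 1 = j + 2 := rfl
          rw [this] at hstep
          linarith
        have h4 : E (j + 1) ≤ E₁ * q ^ j := by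
          have h5 := hdecay (j + 1) (by omega)
          simpa using h5
        have h6 : ‖gradient f (x (j + 2))‖ ^ 2 ≤ (2 * E₁ / r ^ 2) * q ^ j := by
          have h45 : r ^ 2 / 2 * ‖gradient f (x (j + 2))‖ ^ 2 ≤ E₁ * q ^ j := le_trans h3 h4
          have hr2 : (0:ℝ) < r ^ 2 / 2 := by positivity
          calc ‖gradient f (x (j + 2))‖ ^ 2
              = (r ^ 2 / 2 * ‖gradient f (x (j + 2))‖ ^ 2) / (r ^ 2 / 2) := by field_simp
            _ ≤ (E₁ * q ^ j) / (r ^ 2 / 2) := (div_le_div_iff_of_pos_right hr2).2 h45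
            _ = (2 * E₁ / r ^ 2) * q ^ j := by field_simp
        have h7 : ((2 * E₁ / r ^ 2 + 1) / q ^ 2) * q ^ (j + 2)
            = (2 * E₁ / r ^ 2 + 1) * q ^ j := by
          rw [pow_add]
          field_simp
        have h8 : ((2 * E₁ / r ^ 2 + 1) / q ^ 2) * q ^ (j + 2) ≤ M * q ^ (j + 2) :=
          mul_le_mul_of_nonneg_right hM3 (by positivity)
        have h9 : 0 ≤ q ^ j := by positivity
        rw [h7] at h8
        nlinarith [h6, h8, h9]
    have hxgt1 : 1 < q / θ := (one_lt_div hθpos).2 hθltq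
    have hxne : q / θ - 1 ≠ 0 := ne_of_gt (by linarith)
    refine ⟨M * θ / (q * (q / θ - 1)), ?_, ?_⟩
    · apply div_pos (mul_pos hMpos hθpos) (mul_pos hqpos (by linarith))
    · intro k hk
      obtain ⟨n, rfl⟩ : ∃ n, k = n + 1 := ⟨k - 1, by omega⟩
      simp only [Nat.add_sub_cancel]
      have hθne : θ ≠ 0 := hθpos.ne'
      have hqne : q ≠ 0 := hqpos.ne'
      have hθn : θ ^ n ≠ 0 := pow_ne_zero _ hθne
      have hc1 : θ ^ (n + 1) * ∑ j ∈ Finset.range n, (1 / θ) ^ j * ‖gradient f (x j)‖ ^ 2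
          ≤ θ ^ (n + 1) * ∑ j ∈ Finset.range n, (1 / θ) ^ j * (M * q ^ j) := by
        apply mul_le_mul_of_nonneg_left _ (by positivity)
        apply Finset.sum_le_sum
        intro j _
        exact mul_le_mul_of_nonneg_left (hMbound j) (by positivity)
      have hc2 : ∑ j ∈ Finset.range n, (1 / θ) ^ j * (M * q ^ j)
          = M * ∑ j ∈ Finset.range n, (q / θ) ^ j := by
        rw [Finset.mul_sum]
        apply Finset.sum_congr rfl
        intro j _
        rw [div_pow, div_pow, one_pow]
        ring
      have hc3 : ∑ j ∈ Finset.range n, (q / θ) ^ j ≤ (q / θ) ^ n / (q / θ - 1) := by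
        rw [geom_sum_eq (ne_of_gt hxgt1) n]
        have hpos : 0 < q / θ - 1 := by linarith
        exact (div_le_div_iff_of_pos_right hpos).2
          (by linarith [pow_nonneg (le_of_lt (lt_trans one_pos hxgt1)) n])
      have hc4 : θ ^ (n + 1) * (M * ((q / θ) ^ n / (q / θ - 1)))
          = (M * θ / (q * (q / θ - 1))) * q ^ (n + 1) := by
        have hqθ : q - θ ≠ 0 := ne_of_gt (by linarith)
        have h2 : q / θ - 1 = (q - θ) / θ := by field_simp
        rw [div_pow, h2, pow_succ θ n, pow_succ q n]
        field_simp
      calc θ ^ (n + 1) * ∑ j ∈ Finset.range n, (1 / θ) ^ j * ‖gradient f (x j)‖ ^ 2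
          ≤ θ ^ (n + 1) * ∑ j ∈ Finset.range n, (1 / θ) ^ j * (M * q ^ j) := hc1
        _ = θ ^ (n + 1) * (M * ∑ j ∈ Finset.range n, (q / θ) ^ j) := by rw [hc2]
        _ ≤ θ ^ (n + 1) * (M * ((q / θ) ^ n / (q / θ - 1))) := by
            apply mul_le_mul_of_nonneg_left _ (by positivity)
            exact mul_le_mul_of_nonneg_left hc3 hMpos.le
        _ = (M * θ / (q * (q / θ - 1))) * q ^ (n + 1) := hc4
end

section
/- Let f : H → ℝ be a convex differentiable function whose gradient is L-Lipschitz continuous, and let 0 < s ≤ 1/L. Then for all x, y ∈ H: f(y − s∇f(y)) ≤ f(x) + ⟨∇f(y), y − x⟩ − (s/2)‖∇f(y)‖² − (s/2)‖∇f(x) − ∇f(y)‖². -/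
open Real Set

section Aux

variable {H : Type*} [NormedAddCommGroup H] [InnerProductSpace ℝ H] [CompleteSpace H]

local notation "⟪" x ", " y "⟫" => @inner ℝ _ _ x y

lemma inner_gradient_apply' (f : H → ℝ) (x v : H) :
    ⟪gradient f x, v⟫ = fderiv ℝ f x v :=
  InnerProductSpace.toDual_symm_apply

lemma hasDerivAt_line' (f : H → ℝ) (hf : Differentiable ℝ f) (u d : H) (t : ℝ) :
    HasDerivAt (fun t : ℝ => f (u + t • d)) ⟪gradient f (u + t • d), d⟫ t := by
  have h1 : HasDerivAt (fun t : ℝ => u + t • d) d t := by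
    simpa using ((hasDerivAt_id t).smul_const d).const_add u
  have h2 := (hf (u + t • d)).hasFDerivAt.comp_hasDerivAt t h1
  simpa [inner_gradient_apply', Function.comp_def] using h2

/-- Supporting hyperplane inequality for a convex differentiable function. -/
lemma support_ineq' (f : H → ℝ) (hconv : ConvexOn ℝ Set.univ f) (hf : Differentiable ℝ f)
    (u v : H) : f u + ⟪gradient f u, v - u⟫ ≤ f v := by
  set φ : ℝ → ℝ := fun t => f (u + t • (v - u)) with hφdef
  have hφ : ConvexOn ℝ Set.univ φ := by
    have := hconv.comp_affineMap (AffineMap.lineMap u v)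
    have heq : φ = f ∘ (AffineMap.lineMap u v) := by
      funext t
      simp [hφdef, AffineMap.lineMap_apply, add_comm]
    rw [heq]
    simpa using this
  have hd : HasDerivAt φ ⟪gradient f u, v - u⟫ 0 := by
    simpa using hasDerivAt_line' f hf u (v - u) 0
  have hslope := hφ.le_slope_of_hasDerivAt (mem_univ (0:ℝ)) (mem_univ (1:ℝ)) one_pos hd
  have h0 : φ 0 = f u := by simp [hφdef]
  have h1 : φ 1 = f v := by simp [hφdef]
  rw [slope_def_field] at hslope
  simp only [h0, h1] at hslope
  have : ⟪gradient f u, v - u⟫ ≤ f v - f u := by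
    simpa [div_one] using hslope
  linarith

/-- A differentiable function with monotone gradient is convex. -/
lemma convexOn_of_monotone_grad' (g : H → ℝ) (hg : Differentiable ℝ g)
    (hmono : ∀ u v : H, 0 ≤ ⟪gradient g u - gradient g v, u - v⟫) :
    ConvexOn ℝ Set.univ g := by
  refine ⟨convex_univ, fun x _ y _ a b ha hb hab => ?_⟩
  set φ : ℝ → ℝ := fun t => g (x + t • (y - x)) with hφdef
  have hder : ∀ t : ℝ, HasDerivAt φ ⟪gradient g (x + t • (y - x)), y - x⟫ t :=
    fun t => hasDerivAt_line' g hg x (y - x) t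
  have hφdiff : Differentiable ℝ φ := fun t => (hder t).differentiableAt
  have hmonoφ : Monotone (deriv φ) := by
    intro t₁ t₂ h
    rw [(hder t₁).deriv, (hder t₂).deriv]
    rcases eq_or_lt_of_le h with rfl | hlt
    · exact le_rfl
    · have key := hmono (x + t₂ • (y - x)) (x + t₁ • (y - x))
      have hsub : (x + t₂ • (y - x)) - (x + t₁ • (y - x)) = (t₂ - t₁) • (y - x) := by
        module
      rw [hsub, real_inner_smul_right] at key
      have hpos : (0:ℝ) < t₂ - t₁ := by linarith
      have hinner : 0 ≤ ⟪gradient g (x + t₂ • (y - x)) - gradient g (x + t₁ • (y - x)), y - x⟫ := by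
        nlinarith [key, hpos]
      rw [inner_sub_left] at hinner
      linarith
  have hφconv := hmonoφ.convexOn_univ_of_deriv hφdiff
  have happ := hφconv.2 (mem_univ (0:ℝ)) (mem_univ (1:ℝ)) ha hb hab
  have h0 : φ 0 = g x := by simp [hφdef]
  have h1 : φ 1 = g y := by simp [hφdef]
  have harg : a • (0:ℝ) + b • (1:ℝ) = b := by simp
  rw [harg, h0, h1] at happ
  have hxy : a • x + b • y = x + b • (y - x) := by
    have ha' : a = 1 - b := by linarith
    rw [ha']
    rw [smul_sub, sub_smul, one_smul]
    abel
  rw [hxy]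
  exact happ

/-- Descent lemma. -/
lemma descent_lemma' (f : H → ℝ) (hf : Differentiable ℝ f) (L : ℝ) (hL : 0 < L)
    (hLip : ∀ u v : H, ‖gradient f u - gradient f v‖ ≤ L * ‖u - v‖) (u v : H) :
    f v ≤ f u + ⟪gradient f u, v - u⟫ + L / 2 * ‖v - u‖ ^ 2 := by
  set g : H → ℝ := fun x => L / 2 * ⟪x, x⟫ - f x with hgdef
  have hgrad : ∀ x : H, HasGradientAt g (L • x - gradient f x) x := by
    intro x
    have hinner : HasFDerivAt (fun x : H => ⟪x, x⟫)
        ((fderivInnerCLM ℝ (x, x)).comp ((ContinuousLinearMap.id ℝ H).prod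
          (ContinuousLinearMap.id ℝ H))) x :=
      (hasFDerivAt_id x).inner ℝ (hasFDerivAt_id x)
    have hD : HasFDerivAt g
        ((L / 2) • ((fderivInnerCLM ℝ (x, x)).comp ((ContinuousLinearMap.id ℝ H).prod
          (ContinuousLinearMap.id ℝ H))) - fderiv ℝ f x) x :=
      (hinner.const_smul (L / 2)).sub (hf x).hasFDerivAt
    have heq : ((L / 2) • ((fderivInnerCLM ℝ (x, x)).comp ((ContinuousLinearMap.id ℝ H).prod
          (ContinuousLinearMap.id ℝ H))) - fderiv ℝ f x)
        = InnerProductSpace.toDual ℝ H (L • x - gradient f x) := by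
      apply ContinuousLinearMap.ext
      intro v
      simp only [ContinuousLinearMap.sub_apply, ContinuousLinearMap.smul_apply,
        ContinuousLinearMap.comp_apply, ContinuousLinearMap.prod_apply,
        ContinuousLinearMap.id_apply, fderivInnerCLM_apply,
        InnerProductSpace.toDual_apply_apply, inner_sub_left, inner_smul_left]
      rw [← inner_gradient_apply']
      have hsymm : ⟪x, v⟫ = ⟪v, x⟫ := real_inner_comm v x
      simp only [RCLike.star_def, starRingEnd_apply, star_trivial]
      rw [hsymm]
      simp only [smul_eq_mul]
      ring
    rw [heq] at hD
    have := hD.hasGradientAt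
    rwa [LinearIsometryEquiv.symm_apply_apply] at this
  have hgdiff : Differentiable ℝ g := fun x => ((hgrad x).hasFDerivAt).differentiableAt
  have hggrad : ∀ x : H, gradient g x = L • x - gradient f x := fun x => (hgrad x).gradient
  have hgconv : ConvexOn ℝ Set.univ g := by
    apply convexOn_of_monotone_grad' g hgdiff
    intro p q
    rw [hggrad p, hggrad q]
    have hrw : (L • p - gradient f p) - (L • q - gradient f q)
        = L • (p - q) - (gradient f p - gradient f q) := by
      rw [smul_sub]; abel
    rw [hrw, inner_sub_left, real_inner_smul_left, real_inner_self_eq_norm_sq]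
    have hcs : ⟪gradient f p - gradient f q, p - q⟫ ≤ ‖gradient f p - gradient f q‖ * ‖p - q‖ :=
      real_inner_le_norm _ _
    have hlip := hLip p q
    nlinarith [norm_nonneg (p - q), norm_nonneg (gradient f p - gradient f q)]
  have hsupp := support_ineq' g hgconv hgdiff u v
  rw [hgdef] at hsupp
  simp only [← hgdef, hggrad] at hsupp
  rw [inner_sub_left, real_inner_smul_left] at hsupp
  have hexp : ⟪u, v - u⟫ = ⟪u, v⟫ - ⟪u, u⟫ := by rw [inner_sub_right]
  have hnorm : ‖v - u‖ ^ 2 = ⟪v, v⟫ - 2 * ⟪u, v⟫ + ⟪u, u⟫ := by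
    rw [← real_inner_self_eq_norm_sq, inner_sub_left, inner_sub_right, inner_sub_right,
      real_inner_comm u v]
    ring
  rw [hexp] at hsupp
  rw [hnorm]
  nlinarith [hsupp]

/-- Cocoercivity-type lower bound. -/
lemma cocoercive' (f : H → ℝ) (hconv : ConvexOn ℝ Set.univ f) (hf : Differentiable ℝ f)
    (L : ℝ) (hL : 0 < L)
    (hLip : ∀ u v : H, ‖gradient f u - gradient f v‖ ≤ L * ‖u - v‖) (x y : H) :
    f y + ⟪gradient f y, x - y⟫ + 1 / (2 * L) * ‖gradient f x - gradient f y‖ ^ 2 ≤ f x := by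
  set c := gradient f y with hc
  set φ : H → ℝ := fun z => f z - ⟪c, z⟫ with hφdef
  have hφgrad : ∀ z : H, HasGradientAt φ (gradient f z - c) z := by
    intro z
    have hD : HasFDerivAt φ (fderiv ℝ f z - InnerProductSpace.toDual ℝ H c) z := by
      have h2 : HasFDerivAt (fun z : H => ⟪c, z⟫) (InnerProductSpace.toDual ℝ H c) z :=
        (InnerProductSpace.toDual ℝ H c).hasFDerivAt
      exact (hf z).hasFDerivAt.sub h2
    have heq : (fderiv ℝ f z - InnerProductSpace.toDual ℝ H c)
        = InnerProductSpace.toDual ℝ H (gradient f z - c) := by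
      apply ContinuousLinearMap.ext
      intro v
      simp only [ContinuousLinearMap.sub_apply, InnerProductSpace.toDual_apply_apply, inner_sub_left]
      rw [← inner_gradient_apply']
    rw [heq] at hD
    have := hD.hasGradientAt
    rwa [LinearIsometryEquiv.symm_apply_apply] at this
  have hφdiff : Differentiable ℝ φ := fun z => ((hφgrad z).hasFDerivAt).differentiableAt
  have hφg : ∀ z : H, gradient φ z = gradient f z - c := fun z => (hφgrad z).gradient
  have hφconv : ConvexOn ℝ Set.univ φ := by
    apply convexOn_of_monotone_grad' φ hφdiff
    intro u v
    rw [hφg u, hφg v]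
    have hrw : (gradient f u - c) - (gradient f v - c) = gradient f u - gradient f v := by abel
    rw [hrw]
    -- monotonicity of gradient of convex f
    have h1 := support_ineq' f hconv hf u v
    have h2 := support_ineq' f hconv hf v u
    have huv : ⟪gradient f v, u - v⟫ = -⟪gradient f v, v - u⟫ := by
      rw [← inner_neg_right]; congr 1; abel
    rw [huv] at h2
    have e1 : ⟪gradient f u, u - v⟫ = -⟪gradient f u, v - u⟫ := by
      rw [← inner_neg_right]; congr 1; abel
    have e2 : ⟪gradient f v, u - v⟫ = -⟪gradient f v, v - u⟫ := by
      rw [← inner_neg_right]; congr 1; abel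
    rw [inner_sub_left, e1, e2]
    linarith
  have hφLip : ∀ u v : H, ‖gradient φ u - gradient φ v‖ ≤ L * ‖u - v‖ := by
    intro u v
    rw [hφg u, hφg v]
    have : (gradient f u - c) - (gradient f v - c) = gradient f u - gradient f v := by abel
    rw [this]
    exact hLip u v
  -- apply descent lemma to φ at point x with step 1/L
  set w : H := x - (1 / L) • gradient φ x with hw
  have hdesc := descent_lemma' φ hφdiff L hL hφLip x w
  have hwx : w - x = -((1 / L) • gradient φ x) := by rw [hw]; abel
  rw [hwx] at hdesc
  rw [inner_neg_right, real_inner_smul_right, real_inner_self_eq_norm_sq] at hdesc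
  have hnw : ‖-((1 / L) • gradient φ x)‖ ^ 2 = (1 / L) ^ 2 * ‖gradient φ x‖ ^ 2 := by
    rw [norm_neg, norm_smul, Real.norm_eq_abs, abs_of_pos (one_div_pos.mpr hL), mul_pow]
  rw [hnw] at hdesc
  have hLne : L ≠ 0 := ne_of_gt hL
  have hdesc2 : φ w ≤ φ x - 1 / (2 * L) * ‖gradient φ x‖ ^ 2 := by
    have : φ x - (1 / L) * ‖gradient φ x‖ ^ 2 + L / 2 * ((1 / L) ^ 2 * ‖gradient φ x‖ ^ 2)
        = φ x - 1 / (2 * L) * ‖gradient φ x‖ ^ 2 := by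
      field_simp
      ring
    linarith [hdesc, this.symm.le]
  -- y is a global minimizer of φ since gradient φ y = 0
  have hmin : φ y ≤ φ w := by
    have hsupp := support_ineq' φ hφconv hφdiff y w
    have hgy : gradient φ y = 0 := by rw [hφg y, hc]; abel
    rw [hgy] at hsupp
    simpa using hsupp
  have hφx : φ x = f x - ⟪c, x⟫ := rfl
  have hφy : φ y = f y - ⟪c, y⟫ := rfl
  have hgx : gradient φ x = gradient f x - c := hφg x
  have hchain : φ y ≤ φ x - 1 / (2 * L) * ‖gradient f x - c‖ ^ 2 := by
    have h := hmin.trans hdesc2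
    rwa [hgx] at h
  rw [hφx, hφy] at hchain
  have hinner : ⟪c, x - y⟫ = ⟪c, x⟫ - ⟪c, y⟫ := inner_sub_right c x y
  have : ⟪gradient f y, x - y⟫ = ⟪c, x⟫ - ⟪c, y⟫ := by rw [← hc]; exact hinner
  linarith [hchain, this.le]

end Aux

/-- Extended descent lemma (Lemma A.1). -/
theorem extended_descent_lemma
    {H : Type*} [NormedAddCommGroup H] [InnerProductSpace ℝ H] [CompleteSpace H]
    (f : H → ℝ) (hconv : ConvexOn ℝ Set.univ f) (hdiff : Differentiable ℝ f)
    (L : ℝ) (hL : 0 < L)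
    (hLip : ∀ u v : H, ‖gradient f u - gradient f v‖ ≤ L * ‖u - v‖)
    (s : ℝ) (hs0 : 0 < s) (hsL : s ≤ 1 / L) :
    ∀ x y : H,
      f (y - s • gradient f y) ≤
        f x + (inner ℝ (gradient f y) (y - x) : ℝ) - s / 2 * ‖gradient f y‖ ^ 2
          - s / 2 * ‖gradient f x - gradient f y‖ ^ 2 := by
  intro x y
  have hsL' : s * L ≤ 1 := by
    rw [le_div_iff₀ hL] at hsL
    linarith
  -- Step 1: descent step at y
  have h1 := descent_lemma' f hdiff L hL hLip y (y - s • gradient f y)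
  have hdiffpt : (y - s • gradient f y) - y = -(s • gradient f y) := by abel
  rw [hdiffpt, inner_neg_right, real_inner_smul_right, real_inner_self_eq_norm_sq] at h1
  have hns : ‖-(s • gradient f y)‖ ^ 2 = s ^ 2 * ‖gradient f y‖ ^ 2 := by
    rw [norm_neg, norm_smul]
    simp [abs_of_pos hs0]
    ring
  rw [hns] at h1
  have h1' : f (y - s • gradient f y) ≤ f y - s / 2 * ‖gradient f y‖ ^ 2 := by
    have hkey : L / 2 * (s ^ 2 * ‖gradient f y‖ ^ 2) ≤ s / 2 * ‖gradient f y‖ ^ 2 := by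
      have hsq : 0 ≤ ‖gradient f y‖ ^ 2 := sq_nonneg _
      nlinarith
    linarith
  -- Step 2: cocoercivity
  have h2 := cocoercive' f hconv hdiff L hL hLip x y
  have h2' : f y ≤ f x + (inner ℝ (gradient f y) (y - x) : ℝ)
      - s / 2 * ‖gradient f x - gradient f y‖ ^ 2 := by
    have hflip : (inner ℝ (gradient f y) (x - y) : ℝ) = -(inner ℝ (gradient f y) (y - x) : ℝ) := by
      rw [← inner_neg_right]; congr 1; abel
    rw [hflip] at h2
    have hle : s / 2 ≤ 1 / (2 * L) := by
      rw [div_le_div_iff₀ (by norm_num) (by positivity)]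
      linarith
    have hsq : 0 ≤ ‖gradient f x - gradient f y‖ ^ 2 := sq_nonneg _
    nlinarith
  linarith
end
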